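/- arXiv:2307.05980 — 9 statements merged into one kernel-verified Lean document; each statement's English description precedes it below -/
import Mathlib

section
/- Let F : C → D and G : D → C be functors with F left adjoint to G, with unit η : 1_C → GF. Suppose Θ : D → D is an equivalence, F is a generating class of objects of C, and for each P in F an isomorphism θ_P : F(P) ≅ Θ(F(P)) is given. If there exists a natural transformation ν : G ∘ Θ ∘ F → 1_C such that ν_P ∘ G(θ_P) ∘ η_P = id_P for every P in F, then F is twisted separable with twisted separability datum (Θ, F, θ), i.e. there exists a morphism M_{V,W} : Hom_D(F(V), ΘF(W)) → Hom_C(V, W), natural in V and W, with M_{P,P}(θ_P) = id_P for all P in F. -/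
open CategoryTheory

/-- A class of objects is generating if every object receives an epimorphism
from a member of the class. -/
def IsGeneratingClass {C : Type*} [Category C] (F : Set C) : Prop :=
  ∀ V : C, ∃ P ∈ F, ∃ p : P ⟶ V, Epi p

/-- Rafael-type sufficient criterion for twisted separability of a
left adjoint functor. -/
theorem twisted_separable_of_nu
    {C D : Type*} [Category C] [Category D]
    (F : C ⥤ D) (G : D ⥤ C) (adj : F ⊣ G)
    (Θ : D ≌ D) (𝓕 : Set C) (hgen : IsGeneratingClass 𝓕)
    (θiso : ∀ P : C, P ∈ 𝓕 → (F.obj P ≅ Θ.functor.obj (F.obj P)))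
    (ν : F ⋙ Θ.functor ⋙ G ⟶ 𝟭 C)
    (hν : ∀ (P : C) (hP : P ∈ 𝓕),
      adj.unit.app P ≫ G.map (θiso P hP).hom ≫ ν.app P = 𝟙 P) :
    ∃ M : ∀ V W : C, (F.obj V ⟶ Θ.functor.obj (F.obj W)) → (V ⟶ W),
      (∀ (V' V W W' : C) (α : V' ⟶ V) (β : W ⟶ W')
        (f : F.obj V ⟶ Θ.functor.obj (F.obj W)),
          α ≫ M V W f ≫ β = M V' W' (F.map α ≫ f ≫ Θ.functor.map (F.map β))) ∧
      (∀ (P : C) (hP : P ∈ 𝓕), M P P (θiso P hP).hom = 𝟙 P) := by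
  refine ⟨fun V W f => adj.unit.app V ≫ G.map f ≫ ν.app W, ?_, ?_⟩
  · intro V' V W W' α β f
    have hη := adj.unit.naturality α
    have hν' := ν.naturality β
    simp only [Functor.map_comp, Functor.comp_map, Functor.id_map] at *
    slice_lhs 1 2 => rw [hη]
    slice_lhs 4 5 => rw [← hν']
    simp
  · intro P hP
    simpa using hν P hP
end

section
/- Let F : C → D and G : D → C be functors with F left adjoint to G, with unit η : 1_C → GF. Suppose Θ : D → D is an equivalence, F is a generating class of objects of C, and for each P in F an isomorphism θ_P : F(P) ≅ Θ(F(P)) is given. If F is twisted separable with twisted separability datum (Θ, F, θ) via a natural family M_{-,-}, then the maps ν_X := M_{GΘF(X), X}(ε_{ΘF(X)}) (where ε is the counit of the adjunction) define a natural transformation ν : G ∘ Θ ∘ F → 1_C satisfying ν_P ∘ G(θ_P) ∘ η_P = id_P for every P in F. -/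
open CategoryTheory

/-- from a twisted separability datum for a left adjoint functor one
obtains a natural transformation `ν : G ∘ Θ ∘ F ⟶ 1_C`, given by
`ν_X = M_{GΘF(X),X}(ε_{ΘF(X)})`, satisfying `ν_P ∘ G(θ_P) ∘ η_P = id_P` for `P` in
the generating class. -/
theorem nu_of_twisted_separable
    {C D : Type*} [Category C] [Category D]
    (F : C ⥤ D) (G : D ⥤ C) (adj : F ⊣ G)
    (Θ : D ≌ D) (𝓕 : Set C) (hgen : IsGeneratingClass 𝓕)
    (θiso : ∀ P : C, P ∈ 𝓕 → (F.obj P ≅ Θ.functor.obj (F.obj P)))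
    (M : ∀ V W : C, (F.obj V ⟶ Θ.functor.obj (F.obj W)) → (V ⟶ W))
    (hMnat : ∀ (V' V W W' : C) (α : V' ⟶ V) (β : W ⟶ W')
        (f : F.obj V ⟶ Θ.functor.obj (F.obj W)),
          α ≫ M V W f ≫ β = M V' W' (F.map α ≫ f ≫ Θ.functor.map (F.map β)))
    (hM : ∀ (P : C) (hP : P ∈ 𝓕), M P P (θiso P hP).hom = 𝟙 P) :
    ∃ ν : F ⋙ Θ.functor ⋙ G ⟶ 𝟭 C,
      (∀ X : C, ν.app X =
        M (G.obj (Θ.functor.obj (F.obj X))) X (adj.counit.app (Θ.functor.obj (F.obj X)))) ∧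
      (∀ (P : C) (hP : P ∈ 𝓕),
        adj.unit.app P ≫ G.map (θiso P hP).hom ≫ ν.app P = 𝟙 P) := by
  refine ⟨{
    app := fun X => M (G.obj (Θ.functor.obj (F.obj X))) X
      (adj.counit.app (Θ.functor.obj (F.obj X)))
    naturality := fun X Y f => ?_ }, fun X => rfl, fun P hP => ?_⟩
  · have h1 : M (G.obj (Θ.functor.obj (F.obj X))) X
        (adj.counit.app (Θ.functor.obj (F.obj X))) ≫ f
        = M (G.obj (Θ.functor.obj (F.obj X))) Y
          (adj.counit.app (Θ.functor.obj (F.obj X)) ≫ Θ.functor.map (F.map f)) := by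
      have := hMnat (G.obj (Θ.functor.obj (F.obj X))) (G.obj (Θ.functor.obj (F.obj X))) X Y
        (𝟙 _) f (adj.counit.app (Θ.functor.obj (F.obj X)))
      simpa using this
    have h2 : G.map (Θ.functor.map (F.map f)) ≫
        M (G.obj (Θ.functor.obj (F.obj Y))) Y (adj.counit.app (Θ.functor.obj (F.obj Y)))
        = M (G.obj (Θ.functor.obj (F.obj X))) Y
          (adj.counit.app (Θ.functor.obj (F.obj X)) ≫ Θ.functor.map (F.map f)) := by
      have := hMnat (G.obj (Θ.functor.obj (F.obj X))) (G.obj (Θ.functor.obj (F.obj Y))) Y Y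
        (G.map (Θ.functor.map (F.map f))) (𝟙 _)
        (adj.counit.app (Θ.functor.obj (F.obj Y)))
      simp only [Category.comp_id] at this
      rw [this]
      congr 1
      simp [Adjunction.counit_naturality_assoc]
    simp only [Functor.comp_obj, Functor.comp_map, Functor.id_obj, Functor.id_map]
    rw [h1, h2]
  · have h := hMnat P (G.obj (Θ.functor.obj (F.obj P))) P P
      (adj.unit.app P ≫ G.map (θiso P hP).hom) (𝟙 P)
      (adj.counit.app (Θ.functor.obj (F.obj P)))
    simp only [Category.comp_id] at h
    dsimp only
    rw [← Category.assoc, h]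
    rw [show F.map (adj.unit.app P ≫ G.map (θiso P hP).hom) ≫
        adj.counit.app (Θ.functor.obj (F.obj P)) ≫ Θ.functor.map (F.map (𝟙 P))
        = (θiso P hP).hom by
      simp [Adjunction.counit_naturality, Adjunction.left_triangle_components_assoc]]
    exact hM P hP
end

section
/- Let G : D → C be right adjoint to F : C → D with counit ε. Suppose Θ is an autoequivalence of C with chosen quasi-inverse Θ⁻¹ and adjoint equivalence isomorphisms u : 1_C → ΘΘ⁻¹, v : Θ⁻¹Θ → 1_C, F is a generating class of objects of D, and θ_P : G(P) ≅ ΘG(P) are isomorphisms for P in F. Then G is twisted separable with datum (Θ, F, θ) if and only if there exists a natural transformation ξ : 1_D → FΘ⁻¹G such that for each P in F, ε_P ∘ F(v_{G(P)} ∘ Θ⁻¹(θ_P)) ∘ ξ_P = id_P. -/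
open CategoryTheory

/-- Rafael-type characterization of twisted separability for a right
adjoint functor `G`.  Here `Θ : C ≌ C` is an (adjoint) equivalence, with
`u = Θ.counitIso.inv : 1_C ⟶ ΘΘ⁻¹` and `v = Θ.unitIso.inv : Θ⁻¹Θ ⟶ 1_C`. -/
theorem twisted_separable_right_adjoint_iff
    {C D : Type*} [Category C] [Category D]
    (F : C ⥤ D) (G : D ⥤ C) (adj : F ⊣ G)
    (Θ : C ≌ C) (𝓕 : Set D) (hgen : IsGeneratingClass 𝓕)
    (θiso : ∀ P : D, P ∈ 𝓕 → (G.obj P ≅ Θ.functor.obj (G.obj P))) :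
    (∃ M : ∀ X Y : D, (G.obj X ⟶ Θ.functor.obj (G.obj Y)) → (X ⟶ Y),
      (∀ (X' X Y Y' : D) (α : X' ⟶ X) (β : Y ⟶ Y')
        (f : G.obj X ⟶ Θ.functor.obj (G.obj Y)),
          α ≫ M X Y f ≫ β = M X' Y' (G.map α ≫ f ≫ Θ.functor.map (G.map β))) ∧
      (∀ (P : D) (hP : P ∈ 𝓕), M P P (θiso P hP).hom = 𝟙 P)) ↔
    (∃ ξ : 𝟭 D ⟶ G ⋙ Θ.inverse ⋙ F,
      ∀ (P : D) (hP : P ∈ 𝓕),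
        ξ.app P ≫
          F.map (Θ.inverse.map (θiso P hP).hom ≫ Θ.unitIso.inv.app (G.obj P)) ≫
            adj.counit.app P = 𝟙 P) := by
  constructor
  · rintro ⟨M, hnat, hθ⟩
    set ρ : ∀ X : D, G.obj X ⟶ Θ.functor.obj (G.obj (F.obj (Θ.inverse.obj (G.obj X)))) :=
      fun X => Θ.counitIso.inv.app (G.obj X) ≫
        Θ.functor.map (adj.unit.app (Θ.inverse.obj (G.obj X))) with hρ
    refine ⟨⟨fun X => M X (F.obj (Θ.inverse.obj (G.obj X))) (ρ X), ?_⟩, ?_⟩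
    · intro X Y f
      dsimp only [Functor.id_obj, Functor.id_map, Functor.comp_obj, Functor.comp_map]
      have h1 := hnat X Y (F.obj (Θ.inverse.obj (G.obj Y)))
        (F.obj (Θ.inverse.obj (G.obj Y))) f (𝟙 _) (ρ Y)
      have h2 := hnat X X (F.obj (Θ.inverse.obj (G.obj X)))
        (F.obj (Θ.inverse.obj (G.obj Y))) (𝟙 X)
        (F.map (Θ.inverse.map (G.map f))) (ρ X)
      simp only [Category.comp_id, Category.id_comp] at h1 h2
      rw [h1, h2]
      congr 1
      simp only [hρ, Category.assoc, G.map_id, Functor.map_id, Category.comp_id,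
        Category.id_comp]
      have hu : G.map f ≫ Θ.counitIso.inv.app (G.obj Y) =
          Θ.counitIso.inv.app (G.obj X) ≫ Θ.functor.map (Θ.inverse.map (G.map f)) := by
        simpa using Θ.counitIso.inv.naturality (G.map f)
      rw [reassoc_of% hu]
      simp only [Category.comp_id, ← Θ.functor.map_comp]
      rw [adj.unit_naturality]
    · intro P hP
      have h := hnat P P (F.obj (Θ.inverse.obj (G.obj P))) P (𝟙 P)
        (F.map (Θ.inverse.map (θiso P hP).hom ≫ Θ.unitIso.inv.app (G.obj P)) ≫
          adj.counit.app P) (ρ P)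
      simp only [Category.id_comp] at h
      rw [← Category.assoc] at h ⊢
      rw [h]
      have cancel : ∀ {A : C} {Y : D} (g : A ⟶ G.obj Y),
          adj.unit.app A ≫ G.map (F.map g ≫ adj.counit.app Y) = g := by
        intro A Y g
        rw [G.map_comp, ← Category.assoc, adj.unit_naturality g, Category.assoc,
          adj.right_triangle_components, Category.comp_id]
      have key : G.map (𝟙 P) ≫ ρ P ≫ Θ.functor.map
          (G.map (F.map (Θ.inverse.map (θiso P hP).hom ≫ Θ.unitIso.inv.app (G.obj P)) ≫
            adj.counit.app P)) = (θiso P hP).hom := by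
        simp only [G.map_id, Category.id_comp, hρ, Category.assoc]
        rw [← Θ.functor.map_comp, cancel, Functor.map_comp, ← Category.assoc]
        have hu : Θ.counitIso.inv.app (G.obj P) ≫
            Θ.functor.map (Θ.inverse.map (θiso P hP).hom) =
            (θiso P hP).hom ≫ Θ.counitIso.inv.app (Θ.functor.obj (G.obj P)) := by
          simpa using Θ.counitIso.inv.naturality (θiso P hP).hom
        rw [hu, Category.assoc]
        have hz : Θ.counitIso.inv.app (Θ.functor.obj (G.obj P)) ≫
            Θ.functor.map (Θ.unitIso.inv.app (G.obj P)) = 𝟙 _ :=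
          Θ.counitInv_functor_comp (G.obj P)
        rw [hz]
        simp
      rw [key, hθ P hP]
  · rintro ⟨ξ, hξ⟩
    refine ⟨fun X Y f => ξ.app X ≫
      F.map (Θ.inverse.map f ≫ Θ.unitIso.inv.app (G.obj Y)) ≫ adj.counit.app Y, ?_, ?_⟩
    · intro X' X Y Y' α β f
      have hn := ξ.naturality α
      dsimp only [Functor.id_obj, Functor.id_map, Functor.comp_obj, Functor.comp_map] at hn ⊢
      rw [← Category.assoc, ← Category.assoc, hn]
      simp only [Category.assoc]
      rw [← adj.counit_naturality β]
      simp only [← Category.assoc]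
      congr 1
      simp only [Category.assoc, ← F.map_comp]
      congr 1
      have hv := Θ.unitIso.inv.naturality (G.map β)
      dsimp only [Functor.comp_obj, Functor.comp_map, Functor.id_obj, Functor.id_map] at hv
      simp only [Functor.map_comp, Category.assoc, ← hv]
    · intro P hP
      simpa using hξ P hP
end

section
/- Let A be a Hopf algebra and R a left A-Galois object. The canonical functor F_R : A-Mod → R-Bimod, V ↦ V ⊙ R, is separable if and only if there exists a linear map ψ : R → k with ψ(1) = 1 such that ψ(a^{[1]} x a^{[2]}) = ε(a)ψ(x) for all x ∈ R and a ∈ A (i.e. ψ is A-linear for the Miyashita–Ulbrich action). -/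
set_option maxHeartbeats 1000000
set_option synthInstance.maxHeartbeats 1000000


open TensorProduct

universe u

section ComoduleAlgebra

variable (k : Type u) [Field k]
variable (A : Type u) [Ring A] [Bialgebra k A]
variable (R : Type u) [Ring R] [Algebra k R]

/-- The coaction `ρ : R → A ⊗ R` is coassociative. -/
def CoactionCoassoc (ρ : R →ₐ[k] A ⊗[k] R) : Prop :=
  ∀ x : R,
    (TensorProduct.map (Coalgebra.comul (R := k) (A := A)) (LinearMap.id : R →ₗ[k] R)) (ρ x) =
      (TensorProduct.assoc k A A R).symm
        ((TensorProduct.map (LinearMap.id : A →ₗ[k] A) ρ.toLinearMap) (ρ x))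

/-- The coaction `ρ : R → A ⊗ R` is counital. -/
def CoactionCounital (ρ : R →ₐ[k] A ⊗[k] R) : Prop :=
  ∀ x : R,
    (TensorProduct.lid k R)
      ((TensorProduct.map (Coalgebra.counit (R := k) (A := A)) (LinearMap.id : R →ₗ[k] R))
        (ρ x)) = x

/-- The canonical map `can : R ⊗ R → A ⊗ R`, `x ⊗ y ↦ x₍₋₁₎ ⊗ x₍₀₎y`. -/
noncomputable def canMap (ρ : R →ₐ[k] A ⊗[k] R) : R ⊗[k] R →ₗ[k] A ⊗[k] R :=
  (TensorProduct.map (LinearMap.id : A →ₗ[k] A) (LinearMap.mul' k R)).comp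
    (((TensorProduct.assoc k A R R).toLinearMap).comp
      (TensorProduct.map ρ.toLinearMap (LinearMap.id : R →ₗ[k] R)))

variable {k A R}

/-- The left `R`-action on `V ⊗ R` given by `x · (v ⊗ y) = x₍₋₁₎·v ⊗ x₍₀₎y`. -/
noncomputable def lAct (V : Type u) [AddCommGroup V] [Module k V] [Module A V]
    [IsScalarTower k A V] (ρ : R →ₐ[k] A ⊗[k] R) :
    R →ₗ[k] (V ⊗[k] R) →ₗ[k] (V ⊗[k] R) :=
  (TensorProduct.lift
    (((TensorProduct.mapBilinear (RingHom.id k) V R V R).comp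
        (Algebra.lsmul k k V : A →ₐ[k] Module.End k V).toLinearMap).compl₂
      (LinearMap.mul k R))).comp ρ.toLinearMap

/-- The right `R`-action on `V ⊗ R` given by `(v ⊗ y) · z = v ⊗ yz`. -/
noncomputable def rAct (V : Type u) [AddCommGroup V] [Module k V] :
    R →ₗ[k] (V ⊗[k] R) →ₗ[k] (V ⊗[k] R) :=
  ((TensorProduct.mapBilinear (RingHom.id k) V R V R) (LinearMap.id : V →ₗ[k] V)).comp
    (LinearMap.mul k R).flip

/-- A morphism of the canonical `R`-bimodules `V ⊙ R → W ⊙ R`. -/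
def IsBimodHom (ρ : R →ₐ[k] A ⊗[k] R)
    (V : Type u) [AddCommGroup V] [Module k V] [Module A V] [IsScalarTower k A V]
    (W : Type u) [AddCommGroup W] [Module k W] [Module A W] [IsScalarTower k A W]
    (f : (V ⊗[k] R) →ₗ[k] (W ⊗[k] R)) : Prop :=
  (∀ (x : R) (w : V ⊗[k] R), f (lAct V ρ x w) = lAct W ρ x (f w)) ∧
  (∀ (z : R) (w : V ⊗[k] R), f (rAct (k := k) (R := R) V z w) = rAct (k := k) (R := R) W z (f w))

end ComoduleAlgebra

section Aux

variable {k : Type u} [Field k] {A : Type u} [Ring A] [Bialgebra k A]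
  {R : Type u} [Ring R] [Algebra k R]

/-- The translation map `κ(a) = can⁻¹(a ⊗ 1)`. -/
noncomputable def kappa (ρ : R →ₐ[k] A ⊗[k] R)
    (hGal : Function.Bijective (canMap k A R ρ)) : A →ₗ[k] R ⊗[k] R :=
  (LinearEquiv.ofBijective (canMap k A R ρ) hGal).symm.toLinearMap ∘ₗ
    ((TensorProduct.mk k A R).flip 1)

/-- The "middle multiplication" `e (u ⊗ v) x = u * x * v`. -/
noncomputable def eMap : R ⊗[k] R →ₗ[k] R →ₗ[k] R :=
  TensorProduct.lift
    (((LinearMap.llcomp k R R R).comp (LinearMap.mul k R)).compl₂ (LinearMap.mul k R).flip)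

@[simp] lemma eMap_tmul (u v x : R) : eMap (u ⊗ₜ[k] v) x = u * (x * v) := rfl

variable (ρ : R →ₐ[k] A ⊗[k] R)

lemma kappa_apply (hGal : Function.Bijective (canMap k A R ρ)) (a : A) :
    kappa ρ hGal a = (LinearEquiv.ofBijective (canMap k A R ρ) hGal).symm (a ⊗ₜ[k] 1) := rfl

lemma can_tmul (x y : R) :
    canMap k A R ρ (x ⊗ₜ[k] y) = ρ x * ((1 : A) ⊗ₜ[k] y) := by
  have h : ∀ t : A ⊗[k] R,
      (TensorProduct.map (LinearMap.id : A →ₗ[k] A) (LinearMap.mul' k R))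
        ((TensorProduct.assoc k A R R) (t ⊗ₜ[k] y)) = t * ((1 : A) ⊗ₜ[k] y) := by
    intro t
    induction t using TensorProduct.induction_on with
    | zero =>
        simp only [TensorProduct.zero_tmul, LinearEquiv.map_zero, LinearMap.map_zero, zero_mul]
    | tmul b r => simp [Algebra.TensorProduct.tmul_mul_tmul]
    | add s t hs ht =>
        rw [TensorProduct.add_tmul, map_add, map_add, hs, ht, add_mul]
  simpa [canMap] using h (ρ x)

lemma can_kappa (hGal : Function.Bijective (canMap k A R ρ)) (a : A) : canMap k A R ρ (kappa ρ hGal a) = a ⊗ₜ[k] 1 := by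
  rw [kappa_apply]
  exact (LinearEquiv.ofBijective (canMap k A R ρ) hGal).apply_symm_apply _

lemma can_inj (hGal : Function.Bijective (canMap k A R ρ)) :
    Function.Injective (canMap k A R ρ) := hGal.injective

lemma kappa_one (hGal : Function.Bijective (canMap k A R ρ)) : kappa ρ hGal 1 = (1 : R) ⊗ₜ[k] 1 := by
  apply can_inj ρ hGal
  rw [can_kappa, can_tmul]
  simp [Algebra.TensorProduct.one_def]

lemma eMap_apply (s : R ⊗[k] R) (x : R) :
    eMap s x = (LinearMap.mul' k R)
      ((TensorProduct.map (LinearMap.mulRight k x) (LinearMap.id : R →ₗ[k] R)) s) := by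
  induction s using TensorProduct.induction_on with
  | zero => simp
  | tmul u v => simp [mul_assoc]
  | add s t hs ht => simp [map_add, hs, ht]

lemma can_lmulR (z : R) (s : R ⊗[k] R) :
    canMap k A R ρ ((TensorProduct.map (LinearMap.id : R →ₗ[k] R) (LinearMap.mulRight k z)) s) =
      canMap k A R ρ s * ((1 : A) ⊗ₜ[k] z) := by
  induction s using TensorProduct.induction_on with
  | zero => simp
  | tmul x y =>
      rw [TensorProduct.map_tmul, can_tmul, can_tmul]
      simp [Algebra.TensorProduct.tmul_mul_tmul, mul_assoc]
  | add s t hs ht => rw [map_add, map_add, map_add, hs, ht, add_mul]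

lemma mul'_eq_counit (hcounit : CoactionCounital k A R ρ) (s : R ⊗[k] R) :
    (LinearMap.mul' k R) s = (TensorProduct.lid k R)
      ((TensorProduct.map (Coalgebra.counit (R := k) (A := A)) (LinearMap.id : R →ₗ[k] R))
        (canMap k A R ρ s)) := by
  induction s using TensorProduct.induction_on with
  | zero => simp
  | tmul x y =>
      have h : ∀ t : A ⊗[k] R,
          (TensorProduct.lid k R)
            ((TensorProduct.map (Coalgebra.counit (R := k) (A := A))
              (LinearMap.id : R →ₗ[k] R)) (t * ((1 : A) ⊗ₜ[k] y))) =
          (TensorProduct.lid k R)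
            ((TensorProduct.map (Coalgebra.counit (R := k) (A := A))
              (LinearMap.id : R →ₗ[k] R)) t) * y := by
        intro t
        induction t using TensorProduct.induction_on with
        | zero => simp
        | tmul b r => simp [Algebra.TensorProduct.tmul_mul_tmul, smul_mul_assoc]
        | add u w hu hw => rw [add_mul, map_add, map_add, map_add, map_add, hu, hw, add_mul]
      rw [can_tmul, h (ρ x), hcounit x, LinearMap.mul'_apply]
  | add s t hs ht => rw [map_add, map_add, map_add, map_add, hs, ht]

lemma mul'_kappa (hcounit : CoactionCounital k A R ρ)
    (hGal : Function.Bijective (canMap k A R ρ)) (a : A) :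
    (LinearMap.mul' k R) (kappa ρ hGal a) = Coalgebra.counit (R := k) (A := A) a • (1 : R) := by
  rw [mul'_eq_counit ρ hcounit, can_kappa]
  simp

/-- The "outer multiplication" `Φ (x ⊗ y) (u ⊗ v) = x u ⊗ v y`. -/
noncomputable def PhiMap : R ⊗[k] R →ₗ[k] (R ⊗[k] R) →ₗ[k] (R ⊗[k] R) :=
  TensorProduct.lift
    (((TensorProduct.mapBilinear (RingHom.id k) R R R R).comp (LinearMap.mul k R)).compl₂
      (LinearMap.mul k R).flip)

@[simp] lemma PhiMap_tmul (x y u v : R) :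
    PhiMap ((x ⊗ₜ[k] y) : R ⊗[k] R) (u ⊗ₜ[k] v) = (x * u) ⊗ₜ[k] (v * y) := by
  simp [PhiMap, TensorProduct.mapBilinear_apply]

lemma can_Phi_tmul (x y : R) (t : R ⊗[k] R) :
    canMap k A R ρ (PhiMap (x ⊗ₜ[k] y) t) = ρ x * canMap k A R ρ t * ((1 : A) ⊗ₜ[k] y) := by
  induction t using TensorProduct.induction_on with
  | zero => simp
  | tmul u v =>
      rw [PhiMap_tmul, can_tmul, can_tmul, map_mul]
      have : ((1 : A) ⊗ₜ[k] (v * y)) = ((1 : A) ⊗ₜ[k] v) * ((1 : A) ⊗ₜ[k] y) := by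
        simp [Algebra.TensorProduct.tmul_mul_tmul]
      rw [this, mul_assoc, mul_assoc, mul_assoc]
  | add s t hs ht => rw [map_add, map_add, map_add, hs, ht, mul_add, add_mul]

lemma mapRight_mul (b : A) (u : A ⊗[k] R) (y : R) :
    (TensorProduct.map (LinearMap.mulRight k b) (LinearMap.id : R →ₗ[k] R))
        (u * ((1 : A) ⊗ₜ[k] y)) =
      u * (b ⊗ₜ[k] (1 : R)) * ((1 : A) ⊗ₜ[k] y) := by
  induction u using TensorProduct.induction_on with
  | zero => simp
  | tmul a r => simp [Algebra.TensorProduct.tmul_mul_tmul]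
  | add s t hs ht => rw [add_mul, map_add, hs, ht, add_mul, add_mul]

lemma kappa_mul (hGal : Function.Bijective (canMap k A R ρ)) (a b : A) :
    kappa ρ hGal (a * b) = PhiMap (kappa ρ hGal a) (kappa ρ hGal b) := by
  apply can_inj ρ hGal
  rw [can_kappa]
  have h : ∀ s : R ⊗[k] R, canMap k A R ρ (PhiMap s (kappa ρ hGal b)) =
      (TensorProduct.map (LinearMap.mulRight k b) (LinearMap.id : R →ₗ[k] R))
        (canMap k A R ρ s) := by
    intro s
    induction s using TensorProduct.induction_on with
    | zero => simp
    | tmul x y => rw [can_Phi_tmul, can_kappa, can_tmul, mapRight_mul]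
    | add s t hs ht =>
        rw [map_add, LinearMap.add_apply, map_add, hs, ht, ← map_add, ← map_add]
  rw [h, can_kappa]
  simp

lemma eMap_Phi (s t : R ⊗[k] R) : eMap (PhiMap s t) = (eMap s) ∘ₗ (eMap t) := by
  induction s using TensorProduct.induction_on with
  | zero => ext w; simp
  | tmul x y =>
      induction t using TensorProduct.induction_on with
      | zero => ext w; simp
      | tmul u v => ext w; simp [mul_assoc]
      | add t1 t2 h1 h2 => rw [map_add, map_add, h1, h2, ← LinearMap.comp_add, ← map_add]
  | add s1 s2 h1 h2 =>
      rw [map_add, LinearMap.add_apply, map_add, h1, h2, ← LinearMap.add_comp, ← map_add]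

lemma eMap_kappa_mul (hGal : Function.Bijective (canMap k A R ρ)) (a b : A) :
    eMap (kappa ρ hGal (a * b)) = (eMap (kappa ρ hGal a)) ∘ₗ (eMap (kappa ρ hGal b)) := by
  rw [kappa_mul, eMap_Phi]

/-- The inverse of the canonical map, `b ⊗ z ↦ b⁽¹⁾ ⊗ b⁽²⁾ z`. -/
noncomputable def Upsilon (hGal : Function.Bijective (canMap k A R ρ)) :
    A ⊗[k] R →ₗ[k] R ⊗[k] R :=
  TensorProduct.lift
    ((((TensorProduct.mapBilinear (RingHom.id k) R R R R (LinearMap.id : R →ₗ[k] R)).comp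
        (LinearMap.mul k R).flip).flip) ∘ₗ kappa ρ hGal)

lemma Upsilon_tmul (hGal : Function.Bijective (canMap k A R ρ)) (b : A) (z : R) :
    Upsilon ρ hGal (b ⊗ₜ[k] z) =
      (TensorProduct.map (LinearMap.id : R →ₗ[k] R) (LinearMap.mulRight k z))
        (kappa ρ hGal b) := by
  unfold Upsilon
  rw [TensorProduct.lift.tmul]
  rfl

lemma can_Upsilon (hGal : Function.Bijective (canMap k A R ρ)) (t : A ⊗[k] R) :
    canMap k A R ρ (Upsilon ρ hGal t) = t := by
  induction t using TensorProduct.induction_on with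
  | zero => simp
  | tmul b z =>
      rw [Upsilon_tmul, can_lmulR, can_kappa]
      simp [Algebra.TensorProduct.tmul_mul_tmul]
  | add s t hs ht => rw [map_add, map_add, hs, ht]

lemma Upsilon_can (hGal : Function.Bijective (canMap k A R ρ)) (s : R ⊗[k] R) :
    Upsilon ρ hGal (canMap k A R ρ s) = s :=
  can_inj ρ hGal (by rw [can_Upsilon])

lemma Upsilon_rho (hGal : Function.Bijective (canMap k A R ρ)) (x : R) :
    Upsilon ρ hGal (ρ x) = x ⊗ₜ[k] 1 := by
  have h : canMap k A R ρ (x ⊗ₜ[k] (1 : R)) = ρ x := by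
    rw [can_tmul, ← Algebra.TensorProduct.one_def, mul_one]
  rw [← h, Upsilon_can]

/-- The key identity `a⁽¹⁾₍₋₁₎ ⊗ a⁽¹⁾₍₀₎ ⊗ a⁽²⁾ = a₍₁₎ ⊗ a₍₂₎⁽¹⁾ ⊗ a₍₂₎⁽²⁾`. -/
lemma dagger (hcoassoc : CoactionCoassoc k A R ρ)
    (hGal : Function.Bijective (canMap k A R ρ)) (a : A) :
    (TensorProduct.assoc k A R R)
        ((TensorProduct.map ρ.toLinearMap (LinearMap.id : R →ₗ[k] R)) (kappa ρ hGal a)) =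
      (TensorProduct.map (LinearMap.id : A →ₗ[k] A) (kappa ρ hGal))
        (Coalgebra.comul (R := k) (A := A) a) := by
  -- apply the injective map `id ⊗ can` to both sides
  set E := TensorProduct.congr (LinearEquiv.refl k A)
    (LinearEquiv.ofBijective (canMap k A R ρ) hGal) with hE
  have hJ : ∀ t : A ⊗[k] (R ⊗[k] R),
      (TensorProduct.map (LinearMap.id : A →ₗ[k] A) (canMap k A R ρ)) t = E t := by
    intro t
    induction t using TensorProduct.induction_on with
    | zero => simp
    | tmul b s => simp [hE, TensorProduct.congr_tmul]
    | add t1 t2 h1 h2 => rw [map_add, h1, h2, map_add]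
  have J : Function.Injective
      (⇑(TensorProduct.map (LinearMap.id : A →ₗ[k] A) (canMap k A R ρ))) := by
    intro s t hst
    apply E.injective
    rw [← hJ s, ← hJ t]
    exact hst
  apply J
  -- right hand side computes to `assoc (Δ a ⊗ 1)`
  have hR : (TensorProduct.map (LinearMap.id : A →ₗ[k] A) (canMap k A R ρ))
      ((TensorProduct.map (LinearMap.id : A →ₗ[k] A) (kappa ρ hGal))
        (Coalgebra.comul (R := k) (A := A) a)) =
      (TensorProduct.assoc k A A R) ((Coalgebra.comul (R := k) (A := A) a) ⊗ₜ[k] (1 : R)) := by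
    have h1 : ∀ t : A ⊗[k] A,
        (TensorProduct.map (LinearMap.id : A →ₗ[k] A) (canMap k A R ρ))
          ((TensorProduct.map (LinearMap.id : A →ₗ[k] A) (kappa ρ hGal)) t) =
        (TensorProduct.assoc k A A R) (t ⊗ₜ[k] (1 : R)) := by
      intro t
      induction t using TensorProduct.induction_on with
      | zero => simp
      | tmul b c => simp [can_kappa ρ hGal]
      | add s t hs ht =>
          rw [map_add, map_add, hs, ht, TensorProduct.add_tmul, map_add]
    exact h1 _
  rw [hR]
  -- left hand side
  have hL : ∀ s : R ⊗[k] R,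
      (TensorProduct.map (LinearMap.id : A →ₗ[k] A) (canMap k A R ρ))
        ((TensorProduct.assoc k A R R)
          ((TensorProduct.map ρ.toLinearMap (LinearMap.id : R →ₗ[k] R)) s)) =
      (TensorProduct.assoc k A A R)
        ((TensorProduct.map (Coalgebra.comul (R := k) (A := A)) (LinearMap.id : R →ₗ[k] R))
          (canMap k A R ρ s)) := by
    intro s
    induction s using TensorProduct.induction_on with
    | zero => simp
    | tmul x y =>
        -- LHS = `map id can (assoc (ρ x ⊗ y))`
        have key : ∀ (t : A ⊗[k] R) (y : R),
            (TensorProduct.map (LinearMap.id : A →ₗ[k] A) (canMap k A R ρ))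
              ((TensorProduct.assoc k A R R) (t ⊗ₜ[k] y)) =
            (TensorProduct.assoc k A A R)
              (((TensorProduct.assoc k A A R).symm
                  ((TensorProduct.map (LinearMap.id : A →ₗ[k] A) ρ.toLinearMap) t)) *
                ((1 : A ⊗[k] A) ⊗ₜ[k] y)) := by
          intro t y
          induction t using TensorProduct.induction_on with
          | zero => simp
          | tmul b r =>
              simp only [TensorProduct.map_tmul, TensorProduct.assoc_tmul, LinearMap.id_coe,
                id_eq, can_tmul]
              have h2 : ∀ u : A ⊗[k] R,
                  b ⊗ₜ[k] (u * ((1 : A) ⊗ₜ[k] y)) =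
                  (TensorProduct.assoc k A A R)
                    (((TensorProduct.assoc k A A R).symm (b ⊗ₜ[k] u)) *
                      ((1 : A ⊗[k] A) ⊗ₜ[k] y)) := by
                intro u
                induction u using TensorProduct.induction_on with
                | zero => simp
                | tmul c w =>
                    simp [Algebra.TensorProduct.tmul_mul_tmul,
                      Algebra.TensorProduct.one_def]
                | add u1 u2 hu1 hu2 =>
                    rw [add_mul, TensorProduct.tmul_add, hu1, hu2, TensorProduct.tmul_add,
                      map_add, add_mul, map_add]
              exact h2 (ρ r)
          | add t1 t2 h1 h2 =>
              rw [TensorProduct.add_tmul, map_add, map_add, h1, h2, map_add, map_add,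
                add_mul, map_add]
        rw [TensorProduct.map_tmul]
        simp only [AlgHom.toLinearMap_apply, LinearMap.id_coe, id_eq]
        rw [key (ρ x) y]
        have hco := hcoassoc x
        rw [← hco]
        -- now RHS : assoc (map comul id (can (x ⊗ y)))
        rw [can_tmul]
        have h3 : ∀ u : A ⊗[k] R,
            (TensorProduct.map (Coalgebra.comul (R := k) (A := A)) (LinearMap.id : R →ₗ[k] R))
              (u * ((1 : A) ⊗ₜ[k] y)) =
            ((TensorProduct.map (Coalgebra.comul (R := k) (A := A))
              (LinearMap.id : R →ₗ[k] R)) u) * ((1 : A ⊗[k] A) ⊗ₜ[k] y) := by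
          intro u
          induction u using TensorProduct.induction_on with
          | zero => simp
          | tmul c w =>
              simp only [Algebra.TensorProduct.tmul_mul_tmul, TensorProduct.map_tmul,
                LinearMap.id_coe, id_eq, mul_one, one_mul]
          | add u1 u2 hu1 hu2 => rw [add_mul, map_add, hu1, hu2, map_add, add_mul]
        rw [h3 (ρ x)]
    | add s t hs ht => rw [map_add, map_add, map_add, hs, ht, map_add, map_add, map_add]
  exact (hL (kappa ρ hGal a)).trans (by rw [can_kappa]; simp)

section Act

variable (V : Type u) [AddCommGroup V] [Module k V] [Module A V] [IsScalarTower k A V]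

/-- The two-sided action map underlying `lAct`. -/
noncomputable def Bmap : A ⊗[k] R →ₗ[k] (V ⊗[k] R) →ₗ[k] (V ⊗[k] R) :=
  TensorProduct.lift
    (((TensorProduct.mapBilinear (RingHom.id k) V R V R).comp
        (Algebra.lsmul k k V : A →ₐ[k] Module.End k V).toLinearMap).compl₂
      (LinearMap.mul k R))

lemma lAct_eq (x : R) : lAct V ρ x = Bmap (R := R) V (ρ x) := rfl

@[simp] lemma Bmap_tmul (b : A) (r : R) (v : V) (y : R) :
    Bmap (R := R) V (b ⊗ₜ[k] r) (v ⊗ₜ[k] y) = (b • v) ⊗ₜ[k] (r * y) := by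
  simp [Bmap, TensorProduct.mapBilinear_apply]

@[simp] lemma rAct_tmul (z : R) (v : V) (y : R) :
    rAct (k := k) (R := R) V z (v ⊗ₜ[k] y) = v ⊗ₜ[k] (y * z) := by
  simp [rAct, TensorProduct.mapBilinear_apply]

variable (ψ : R →ₗ[k] k)

/-- Contraction `w ⊗ r ↦ ψ(r) • w`. -/
noncomputable def contractMap : V ⊗[k] R →ₗ[k] V :=
  (TensorProduct.rid k V).toLinearMap ∘ₗ
    TensorProduct.map (LinearMap.id : V →ₗ[k] V) ψ

@[simp] lemma contractMap_tmul (w : V) (r : R) :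
    contractMap V ψ (w ⊗ₜ[k] r) = ψ r • w := by
  simp [contractMap]

/-- Insertion `v ↦ v ⊗ 1`. -/
noncomputable def insMap : V →ₗ[k] V ⊗[k] R := (TensorProduct.mk k V R).flip 1

@[simp] lemma insMap_apply (v : V) : insMap (R := R) V v = v ⊗ₜ[k] 1 := rfl

lemma smul_comm'' (c : k) (a : A) (w : V) : a • c • w = c • a • w := by
  rw [← algebraMap_smul A c w, ← mul_smul, ← Algebra.commutes, mul_smul, algebraMap_smul]

/-- The auxiliary functional `Λ (b ⊗ s) = ψ(e(s)(r)) • (b • w)`. -/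
noncomputable def LamMap (w : V) (r : R) : A ⊗[k] (R ⊗[k] R) →ₗ[k] V :=
  TensorProduct.lift
    (((((LinearMap.lsmul k V).comp (ψ ∘ₗ eMap.flip r)).flip) : V →ₗ[k] (R ⊗[k] R) →ₗ[k] V) ∘ₗ
      ((Algebra.lsmul k k V : A →ₐ[k] Module.End k V).toLinearMap.flip w))

@[simp] lemma LamMap_tmul (w : V) (r : R) (b : A) (s : R ⊗[k] R) :
    LamMap V ψ w r (b ⊗ₜ[k] s) = ψ (eMap s r) • (b • w) := by
  simp [LamMap]

end Act

/-- The crucial computation: `M` built from `ψ` sends bimodule maps to `A`-linear maps. -/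
lemma contract_f_smul
    (hcoassoc : CoactionCoassoc k A R ρ)
    (hGal : Function.Bijective (canMap k A R ρ))
    (ψ : R →ₗ[k] k)
    (hψ : ∀ (a : A) (x : R), ψ (eMap (kappa ρ hGal a) x)
        = Coalgebra.counit (R := k) (A := A) a * ψ x)
    (V : Type u) [AddCommGroup V] [Module k V] [Module A V] [IsScalarTower k A V]
    (W : Type u) [AddCommGroup W] [Module k W] [Module A W] [IsScalarTower k A W]
    (f : (V ⊗[k] R) →ₗ[k] (W ⊗[k] R))
    (hl : ∀ (x : R) (w : V ⊗[k] R), f (lAct V ρ x w) = lAct W ρ x (f w))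
    (hr : ∀ (z : R) (w : V ⊗[k] R),
      f (rAct (k := k) (R := R) V z w) = rAct (k := k) (R := R) W z (f w))
    (a : A) (v : V) :
    contractMap W ψ (f ((a • v) ⊗ₜ[k] (1 : R))) =
      a • contractMap W ψ (f (v ⊗ₜ[k] (1 : R))) := by
  classical
  obtain ⟨S, hS⟩ := TensorProduct.exists_finset (kappa ρ hGal a)
  -- the auxiliary map `H (b ⊗ y) = (b • v) ⊗ y`
  set Hv : A ⊗[k] R →ₗ[k] V ⊗[k] R :=
    TensorProduct.lift ((TensorProduct.mk k V R).comp
      ((Algebra.lsmul k k V : A →ₐ[k] Module.End k V).toLinearMap.flip v)) with hHv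
  have Hv_tmul : ∀ (b : A) (y : R), Hv (b ⊗ₜ[k] y) = (b • v) ⊗ₜ[k] y := by
    intro b y; simp [hHv]
  -- Step A: `(a • v) ⊗ 1 = ∑ lAct p.1 (v ⊗ p.2)`
  have h1 : ∀ x y : R, Hv (canMap k A R ρ (x ⊗ₜ[k] y)) = lAct V ρ x (v ⊗ₜ[k] y) := by
    intro x y
    rw [can_tmul, lAct_eq]
    have : ∀ t : A ⊗[k] R, Hv (t * ((1 : A) ⊗ₜ[k] y)) = Bmap (R := R) V t (v ⊗ₜ[k] y) := by
      intro t
      induction t using TensorProduct.induction_on with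
      | zero => simp
      | tmul b r => rw [Algebra.TensorProduct.tmul_mul_tmul, Hv_tmul, Bmap_tmul, mul_one]
      | add t1 t2 ht1 ht2 =>
          rw [add_mul, map_add, ht1, ht2, map_add, LinearMap.add_apply]
    exact this (ρ x)
  have hA : (a • v) ⊗ₜ[k] (1 : R) = ∑ p ∈ S, lAct V ρ p.1 (v ⊗ₜ[k] p.2) := by
    have : (a • v) ⊗ₜ[k] (1 : R) = Hv (a ⊗ₜ[k] (1 : R)) := by rw [Hv_tmul]
    rw [this, ← can_kappa ρ hGal a, hS, map_sum, map_sum]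
    exact Finset.sum_congr rfl fun p _ => h1 p.1 p.2
  -- Step B: push through `f`
  have hB : f ((a • v) ⊗ₜ[k] (1 : R)) =
      ∑ p ∈ S, lAct W ρ p.1 (rAct (k := k) (R := R) W p.2 (f (v ⊗ₜ[k] (1 : R)))) := by
    rw [hA, map_sum]
    refine Finset.sum_congr rfl fun p _ => ?_
    have : (v ⊗ₜ[k] p.2) = rAct (k := k) (R := R) V p.2 (v ⊗ₜ[k] (1 : R)) := by
      rw [rAct_tmul, one_mul]
    rw [this, hl, hr]
  rw [hB, map_sum]
  -- Step C
  set u := f (v ⊗ₜ[k] (1 : R)) with hu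
  have hC : ∀ u : W ⊗[k] R,
      ∑ p ∈ S, contractMap W ψ (lAct W ρ p.1 (rAct (k := k) (R := R) W p.2 u)) =
        a • contractMap W ψ u := by
    intro u
    induction u using TensorProduct.induction_on with
    | zero => simp
    | tmul w r =>
        -- each term is `LamMap (assoc (ρ p.1 ⊗ p.2))`
        have h2 : ∀ x y : R, contractMap W ψ (lAct W ρ x (rAct (k := k) (R := R) W y (w ⊗ₜ[k] r)))
            = LamMap W ψ w r ((TensorProduct.assoc k A R R)
                ((TensorProduct.map ρ.toLinearMap (LinearMap.id : R →ₗ[k] R)) (x ⊗ₜ[k] y))) := by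
          intro x y
          rw [rAct_tmul, lAct_eq, TensorProduct.map_tmul]
          simp only [AlgHom.toLinearMap_apply, LinearMap.id_coe, id_eq]
          have : ∀ t : A ⊗[k] R, contractMap W ψ (Bmap (R := R) W t (w ⊗ₜ[k] (r * y)))
              = LamMap W ψ w r ((TensorProduct.assoc k A R R) (t ⊗ₜ[k] y)) := by
            intro t
            induction t using TensorProduct.induction_on with
            | zero => simp
            | tmul b c =>
                rw [Bmap_tmul, contractMap_tmul, TensorProduct.assoc_tmul, LamMap_tmul]
                simp [mul_assoc]
            | add t1 t2 ht1 ht2 =>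
                rw [TensorProduct.add_tmul, map_add, map_add, LinearMap.add_apply, map_add,
                  map_add, ht1, ht2]
          exact this (ρ x)
        rw [Finset.sum_congr rfl fun p _ => h2 p.1 p.2, ← map_sum, ← map_sum, ← map_sum,
          ← hS, dagger ρ hcoassoc hGal a]
        -- now use the sum representation of `comul a`
        obtain ⟨T, hT⟩ := TensorProduct.exists_finset (Coalgebra.comul (R := k) (A := A) a)
        rw [hT, map_sum, map_sum]
        have h3 : ∀ q : A × A, LamMap W ψ w r
            ((TensorProduct.map (LinearMap.id : A →ₗ[k] A) (kappa ρ hGal)) (q.1 ⊗ₜ[k] q.2)) =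
            ψ r • (Coalgebra.counit (R := k) (A := A) q.2 • q.1) • w := by
          intro q
          rw [TensorProduct.map_tmul, LinearMap.id_coe, id_eq, LamMap_tmul, hψ, smul_assoc,
            mul_smul, smul_comm]
        rw [Finset.sum_congr rfl fun q _ => h3 q]
        rw [← Finset.smul_sum, ← Finset.sum_smul]
        have h4 : (∑ q ∈ T, Coalgebra.counit (R := k) (A := A) q.2 • q.1) = a := by
          have h5 := congrArg (TensorProduct.rid k A)
            (Coalgebra.lTensor_counit_comul (R := k) (A := A) a)
          rw [hT, map_sum] at h5
          simp only [LinearMap.lTensor_tmul, TensorProduct.rid_tmul, one_smul, map_sum] at h5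
          exact h5
        rw [h4, contractMap_tmul, smul_comm'' W]
    | add u1 u2 hu1 hu2 =>
        simp only [map_add, smul_add, ← hu1, ← hu2, ← Finset.sum_add_distrib]
  exact hC u

lemma contract_natural {W : Type u} [AddCommGroup W] [Module k W]
    {W' : Type u} [AddCommGroup W'] [Module k W']
    (ψ : R →ₗ[k] k) (β : W →ₗ[k] W') (X : W ⊗[k] R) :
    contractMap W' ψ (TensorProduct.map β (LinearMap.id : R →ₗ[k] R) X) =
      β (contractMap W ψ X) := by
  induction X using TensorProduct.induction_on with
  | zero => simp
  | tmul w r => simp [map_smul]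
  | add X1 X2 h1 h2 => simp only [map_add, h1, h2]

lemma eMap_lmulR (c v : R) (s : R ⊗[k] R) :
    eMap ((TensorProduct.map (LinearMap.id : R →ₗ[k] R) (LinearMap.mulRight k c)) s) v =
      eMap s v * c := by
  induction s using TensorProduct.induction_on with
  | zero => simp
  | tmul u z => simp [mul_assoc]
  | add s1 s2 h1 h2 => rw [map_add, map_add, LinearMap.add_apply, h1, h2, map_add,
      LinearMap.add_apply, add_mul]

/-- The Miyashita–Ulbrich `A`-module structure on `R`. -/
noncomputable def muModule (hGal : Function.Bijective (canMap k A R ρ)) : Module A R :=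
  { toDistribMulAction :=
    { toMulAction :=
      { toSMul := ⟨fun a x => eMap (kappa ρ hGal a) x⟩
        one_smul := fun x => by
          show eMap (kappa ρ hGal 1) x = x
          rw [kappa_one]
          simp
        mul_smul := fun a b x => by
          show eMap (kappa ρ hGal (a * b)) x =
            eMap (kappa ρ hGal a) (eMap (kappa ρ hGal b) x)
          rw [eMap_kappa_mul]
          rfl }
      smul_zero := fun a => by show eMap _ (0 : R) = 0; simp
      smul_add := fun a x y => by show eMap _ (x + y) = eMap _ x + eMap _ y; simp }
    add_smul := fun a b x => by
      show eMap (kappa ρ hGal (a + b)) x = eMap (kappa ρ hGal a) x + eMap (kappa ρ hGal b) x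
      rw [map_add, map_add, LinearMap.add_apply]
    zero_smul := fun x => by
      show eMap (kappa ρ hGal 0) x = 0
      rw [map_zero, map_zero, LinearMap.zero_apply] }

/-- The Miyashita–Ulbrich action is compatible with the `k`-structure. -/
noncomputable def muTower (hGal : Function.Bijective (canMap k A R ρ)) :
    @IsScalarTower k A R _ (muModule ρ hGal).toDistribMulAction.toMulAction.toSMul _ :=
  @IsScalarTower.mk k A R _ (muModule ρ hGal).toDistribMulAction.toMulAction.toSMul _
    (fun c a x => by
      show eMap (kappa ρ hGal (c • a)) x = c • eMap (kappa ρ hGal a) x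
      rw [map_smul, map_smul, LinearMap.smul_apply])

/-- The trivial `A`-module structure on `k` via the counit. -/
noncomputable def trivModule : Module A k :=
  Module.compHom k (Bialgebra.counitAlgHom k A).toRingHom

/-- The trivial module is compatible with the `k`-structure. -/
noncomputable def trivTower :
    @IsScalarTower k A k _
      (trivModule (k := k) (A := A)).toDistribMulAction.toMulAction.toSMul _ :=
  @IsScalarTower.mk k A k _
    (trivModule (k := k) (A := A)).toDistribMulAction.toMulAction.toSMul _
    (fun c a x => by
      show Coalgebra.counit (R := k) (A := A) (c • a) * x =
        c • (Coalgebra.counit (R := k) (A := A) a * x)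
      rw [map_smul, smul_eq_mul, smul_eq_mul, mul_assoc])

end Aux

/-- for a left `A`-Galois object `R`, the canonical functor
`F_R : V ↦ V ⊙ R` from `A`-modules to `R`-bimodules is separable if and only if
there is a unital linear functional `ψ : R → k` which is `A`-linear for the
Miyashita–Ulbrich action, i.e. `ψ(a⁽¹⁾ x a⁽²⁾) = ε(a) ψ(x)`. -/
theorem galois_canonical_functor_separable_iff
    {k : Type u} [Field k] {A : Type u} [Ring A] [Bialgebra k A]
    {R : Type u} [Ring R] [Algebra k R] [Nontrivial R]
    (ρ : R →ₐ[k] A ⊗[k] R) (hcoassoc : CoactionCoassoc k A R ρ)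
    (hcounit : CoactionCounital k A R ρ)
    (hGal : Function.Bijective (canMap k A R ρ)) :
    (∃ M : ∀ (V : Type u) [AddCommGroup V] [Module k V] [Module A V] [IsScalarTower k A V]
        (W : Type u) [AddCommGroup W] [Module k W] [Module A W] [IsScalarTower k A W],
        ((V ⊗[k] R) →ₗ[k] (W ⊗[k] R)) → (V →ₗ[k] W),
      -- `M` sends bimodule morphisms to `A`-linear maps
      (∀ (V : Type u) [AddCommGroup V] [Module k V] [Module A V] [IsScalarTower k A V]
        (W : Type u) [AddCommGroup W] [Module k W] [Module A W] [IsScalarTower k A W]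
        (f : (V ⊗[k] R) →ₗ[k] (W ⊗[k] R)), IsBimodHom ρ V W f →
          ∀ (a : A) (v : V), M V W f (a • v) = a • M V W f v) ∧
      -- naturality of `M`
      (∀ (V' : Type u) [AddCommGroup V'] [Module k V'] [Module A V'] [IsScalarTower k A V']
        (V : Type u) [AddCommGroup V] [Module k V] [Module A V] [IsScalarTower k A V]
        (W : Type u) [AddCommGroup W] [Module k W] [Module A W] [IsScalarTower k A W]
        (W' : Type u) [AddCommGroup W'] [Module k W'] [Module A W'] [IsScalarTower k A W']
        (α : V' →ₗ[k] V) (_ : ∀ (a : A) (v : V'), α (a • v) = a • α v)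
        (β : W →ₗ[k] W') (_ : ∀ (a : A) (w : W), β (a • w) = a • β w)
        (f : (V ⊗[k] R) →ₗ[k] (W ⊗[k] R)), IsBimodHom ρ V W f →
          M V' W' ((TensorProduct.map β (LinearMap.id : R →ₗ[k] R)) ∘ₗ f ∘ₗ
              (TensorProduct.map α (LinearMap.id : R →ₗ[k] R))) =
            β ∘ₗ (M V W f) ∘ₗ α) ∧
      -- normalization: `M_{V,V}(id) = id`
      (∀ (V : Type u) [AddCommGroup V] [Module k V] [Module A V] [IsScalarTower k A V],
        M V V LinearMap.id = LinearMap.id)) ↔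
    (∃ ψ : R →ₗ[k] k, ψ 1 = 1 ∧
      ∀ (a : A) (x : R),
        ψ ((LinearMap.mul' k R)
          ((TensorProduct.map (LinearMap.mulRight k x) (LinearMap.id : R →ₗ[k] R))
            ((LinearEquiv.ofBijective (canMap k A R ρ) hGal).symm (a ⊗ₜ[k] (1 : R))))) =
          Coalgebra.counit (R := k) a * ψ x) := by
  constructor
  · -- separability implies the existence of `ψ`
    rintro ⟨M, hMA, hMnat, hMid⟩
    letI iM : Module A R := muModule ρ hGal
    letI iT : IsScalarTower k A R := muTower ρ hGal
    letI iMk : Module A k := trivModule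
    letI iTk : IsScalarTower k A k := trivTower
    have musmul : ∀ (b : A) (v : R), b • v = eMap (kappa ρ hGal b) v := fun _ _ => rfl
    have trivsmul : ∀ (b : A) (c : k), b • c = Coalgebra.counit (R := k) (A := A) b * c :=
      fun _ _ => rfl
    set f : (R ⊗[k] R) →ₗ[k] (k ⊗[k] R) :=
      (TensorProduct.lid k R).symm.toLinearMap ∘ₗ LinearMap.mul' k R with hf
    have f_tmul : ∀ v y : R, f (v ⊗ₜ[k] y) = (TensorProduct.lid k R).symm (v * y) := by
      intro v y; simp [hf]
    have eMap_one : ∀ s : R ⊗[k] R, eMap s 1 = (LinearMap.mul' k R) s := by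
      intro s
      induction s using TensorProduct.induction_on with
      | zero => simp
      | tmul u v => simp
      | add s1 s2 h1 h2 => rw [map_add, LinearMap.add_apply, h1, h2, map_add]
    -- `f` is a morphism of bimodules
    have hfl : ∀ (x : R) (s : R ⊗[k] R), f (lAct R ρ x s) = lAct k ρ x (f s) := by
      intro x s
      induction s using TensorProduct.induction_on with
      | zero => simp
      | tmul v y =>
          rw [lAct_eq, lAct_eq]
          have aux1 : ∀ t : A ⊗[k] R, f (Bmap (R := R) R t (v ⊗ₜ[k] y)) =
              (TensorProduct.lid k R).symm (eMap (Upsilon ρ hGal t) v * y) := by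
            intro t
            induction t using TensorProduct.induction_on with
            | zero => simp
            | tmul b c =>
                rw [Bmap_tmul, f_tmul, Upsilon_tmul, eMap_lmulR, musmul, mul_assoc]
            | add t1 t2 h1 h2 =>
                simp only [map_add, LinearMap.add_apply, h1, h2, add_mul]
          have aux2 : ∀ (t : A ⊗[k] R) (u : R),
              Bmap (R := R) k t ((TensorProduct.lid k R).symm u) =
              (TensorProduct.lid k R).symm
                ((TensorProduct.lid k R)
                  ((TensorProduct.map (Coalgebra.counit (R := k) (A := A))
                    (LinearMap.id : R →ₗ[k] R)) t) * u) := by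
            intro t u
            induction t using TensorProduct.induction_on with
            | zero => simp
            | tmul b c =>
                rw [TensorProduct.lid_symm_apply, Bmap_tmul, trivsmul, mul_one,
                  TensorProduct.map_tmul, TensorProduct.lid_tmul, TensorProduct.lid_symm_apply]
                simp only [LinearMap.id_coe, id_eq, smul_mul_assoc, TensorProduct.tmul_smul]
                rw [TensorProduct.smul_tmul', smul_eq_mul, mul_one]
            | add t1 t2 h1 h2 =>
                simp only [map_add, LinearMap.add_apply, h1, h2, add_mul]
          rw [aux1 (ρ x), Upsilon_rho, f_tmul, aux2 (ρ x), hcounit x]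
          simp [mul_assoc]
      | add s1 s2 h1 h2 => simp only [map_add, h1, h2]
    have hfr : ∀ (z : R) (s : R ⊗[k] R),
        f (rAct (k := k) (R := R) R z s) = rAct (k := k) (R := R) k z (f s) := by
      intro z s
      induction s using TensorProduct.induction_on with
      | zero => simp
      | tmul v y =>
          rw [rAct_tmul, f_tmul, f_tmul, TensorProduct.lid_symm_apply,
            TensorProduct.lid_symm_apply, rAct_tmul, mul_assoc]
      | add s1 s2 h1 h2 => simp only [map_add, h1, h2]
    have hbi : IsBimodHom ρ R k f := ⟨hfl, hfr⟩
    refine ⟨M R k f, ?_, ?_⟩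
    · -- normalisation `ψ 1 = 1`
      have hα : ∀ (a : A) (c : k),
          (Algebra.linearMap k R) (a • c) = a • (Algebra.linearMap k R) c := by
        intro a c
        rw [trivsmul, musmul, Algebra.linearMap_apply, Algebra.linearMap_apply,
          Algebra.algebraMap_eq_smul_one, Algebra.algebraMap_eq_smul_one, map_smul,
          eMap_one, mul'_kappa ρ hcounit hGal, smul_smul, mul_comm]
      have hβ : ∀ (a : A) (w : k),
          (LinearMap.id : k →ₗ[k] k) (a • w) = a • (LinearMap.id : k →ₗ[k] k) w :=
        fun _ _ => rfl
      have hnat := hMnat k R k k (Algebra.linearMap k R) hα LinearMap.id hβ f hbi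
      have hcomp : (TensorProduct.map (LinearMap.id : k →ₗ[k] k)
            (LinearMap.id : R →ₗ[k] R)) ∘ₗ f ∘ₗ
            (TensorProduct.map (Algebra.linearMap k R) (LinearMap.id : R →ₗ[k] R)) =
          LinearMap.id := by
        apply TensorProduct.ext'
        intro c r
        simp only [LinearMap.comp_apply, TensorProduct.map_tmul, LinearMap.id_coe, id_eq,
          Algebra.linearMap_apply]
        rw [f_tmul, ← Algebra.smul_def, TensorProduct.lid_symm_apply,
          TensorProduct.tmul_smul, TensorProduct.smul_tmul', smul_eq_mul, mul_one]
        simp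
      rw [hcomp, hMid] at hnat
      have h1 := congrArg (fun g : k →ₗ[k] k => g 1) hnat
      simp only [LinearMap.id_coe, id_eq, LinearMap.comp_apply, Algebra.linearMap_apply,
        map_one] at h1
      exact h1.symm
    · -- the Miyashita–Ulbrich equivariance of `ψ`
      intro a x
      have h2 := hMA R k f hbi a x
      rw [musmul, trivsmul] at h2
      rw [← kappa_apply ρ hGal a, ← eMap_apply]
      exact h2
  · -- a functional `ψ` yields a separability structure
    rintro ⟨ψ, hψ1, hψprop⟩
    have hψ : ∀ (a : A) (x : R), ψ (eMap (kappa ρ hGal a) x) =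
        Coalgebra.counit (R := k) (A := A) a * ψ x := by
      intro a x
      rw [eMap_apply, kappa_apply]
      exact hψprop a x
    refine ⟨fun V _ _ _ _ W _ _ _ _ f => contractMap W ψ ∘ₗ f ∘ₗ insMap V, ?_, ?_, ?_⟩
    · intro V _ _ _ _ W _ _ _ _ f hf a v
      simp only [LinearMap.comp_apply, insMap_apply]
      exact contract_f_smul ρ hcoassoc hGal ψ hψ V W f hf.1 hf.2 a v
    · intro V' _ _ _ _ V _ _ _ _ W _ _ _ _ W' _ _ _ _ α hα β hβ f hf
      apply LinearMap.ext
      intro v'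
      simp only [LinearMap.comp_apply, insMap_apply, TensorProduct.map_tmul,
        LinearMap.id_coe, id_eq]
      rw [contract_natural]
    · intro V _ _ _ _
      apply LinearMap.ext
      intro v
      simp only [LinearMap.comp_apply, insMap_apply, LinearMap.id_coe, id_eq]
      rw [contractMap_tmul, hψ1, one_smul]
end

section
/- Let C be a cogroupoid and X, Y objects of C. Then the map S_{Y,X} ∘ S_{X,Y} : C(X,Y) → C(X,Y) is left semi-C(X,X)-colinear with respect to the Hopf algebra automorphism S_{X,X}²; that is, for the left C(X,X)-comodule structure Δ_{X,Y}^X on C(X,Y), one has Δ_{X,Y}^X(S_{Y,X}S_{X,Y}(a)) = (S_{X,X}² ⊗ S_{Y,X}S_{X,Y})(Δ_{X,Y}^X(a)) for all a ∈ C(X,Y). -/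
open TensorProduct

set_option maxHeartbeats 1000000
set_option synthInstance.maxHeartbeats 1000000

section Aux

variable {k : Type*} [Field k] {ι : Type*} {Cg : ι → ι → Type*}
  [∀ U V, Ring (Cg U V)] [∀ U V, Algebra k (Cg U V)]
  {A : Type*} [Ring A] [Algebra k A]

/-- generalized convolution in a cogroupoid -/
noncomputable def cgConv (Δ : ∀ U V W, Cg U V →ₐ[k] Cg U W ⊗[k] Cg W V)
    (U V W : ι) (f : Cg U W →ₗ[k] A) (g : Cg W V →ₗ[k] A) : Cg U V →ₗ[k] A :=
  (LinearMap.mul' k A) ∘ₗ (TensorProduct.map f g) ∘ₗ (Δ U V W).toLinearMap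

lemma cgConv_apply (Δ : ∀ U V W, Cg U V →ₐ[k] Cg U W ⊗[k] Cg W V)
    (U V W : ι) (f : Cg U W →ₗ[k] A) (g : Cg W V →ₗ[k] A) (a : Cg U V) :
    cgConv Δ U V W f g a = LinearMap.mul' k A (TensorProduct.map f g (Δ U V W a)) := rfl

lemma cgConv_unit_left (Δ : ∀ U V W, Cg U V →ₐ[k] Cg U W ⊗[k] Cg W V)
    (εm : ∀ U, Cg U U →ₐ[k] k)
    (hcounitl : ∀ (U V : ι) (a : Cg U V),
      (TensorProduct.lid k (Cg U V))
        ((TensorProduct.map (εm U).toLinearMap (LinearMap.id : Cg U V →ₗ[k] Cg U V))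
          (Δ U V U a)) = a)
    (U V : ι) (g : Cg U V →ₗ[k] A) :
    cgConv Δ U V U ((Algebra.linearMap k A) ∘ₗ (εm U).toLinearMap) g = g := by
  ext a
  have key : ∀ t : Cg U U ⊗[k] Cg U V,
      LinearMap.mul' k A
          (TensorProduct.map ((Algebra.linearMap k A) ∘ₗ (εm U).toLinearMap) g t)
        = g ((TensorProduct.lid k (Cg U V))
            ((TensorProduct.map (εm U).toLinearMap
              (LinearMap.id : Cg U V →ₗ[k] Cg U V)) t)) := by
    intro t
    induction t using TensorProduct.induction_on with
    | zero => simp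
    | tmul x y =>
      simp only [map_tmul, LinearMap.coe_comp, Function.comp_apply, Algebra.linearMap_apply,
        LinearMap.mul'_apply, LinearMap.id_coe, id_eq, lid_tmul, LinearMap.map_smul]
      rw [Algebra.smul_def]
    | add s t hs ht => simp [map_add, hs, ht]
  rw [cgConv_apply, key, hcounitl]

lemma cgConv_unit_right (Δ : ∀ U V W, Cg U V →ₐ[k] Cg U W ⊗[k] Cg W V)
    (εm : ∀ U, Cg U U →ₐ[k] k)
    (hcounitr : ∀ (U V : ι) (a : Cg U V),
      (TensorProduct.rid k (Cg U V))
        ((TensorProduct.map (LinearMap.id : Cg U V →ₗ[k] Cg U V) (εm V).toLinearMap)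
          (Δ U V V a)) = a)
    (U V : ι) (f : Cg U V →ₗ[k] A) :
    cgConv Δ U V V f ((Algebra.linearMap k A) ∘ₗ (εm V).toLinearMap) = f := by
  ext a
  have key : ∀ t : Cg U V ⊗[k] Cg V V,
      LinearMap.mul' k A
          (TensorProduct.map f ((Algebra.linearMap k A) ∘ₗ (εm V).toLinearMap) t)
        = f ((TensorProduct.rid k (Cg U V))
            ((TensorProduct.map (LinearMap.id : Cg U V →ₗ[k] Cg U V)
              (εm V).toLinearMap) t)) := by
    intro t
    induction t using TensorProduct.induction_on with
    | zero => simp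
    | tmul x y =>
      simp only [map_tmul, LinearMap.coe_comp, Function.comp_apply, Algebra.linearMap_apply,
        LinearMap.mul'_apply, LinearMap.id_coe, id_eq, rid_tmul, LinearMap.map_smul]
      rw [Algebra.smul_def, Algebra.commutes]
    | add s t hs ht => simp [map_add, hs, ht]
  rw [cgConv_apply, key, hcounitr]

lemma cgConv_assoc (Δ : ∀ U V W, Cg U V →ₐ[k] Cg U W ⊗[k] Cg W V)
    (hcoassoc : ∀ (U V W T : ι) (a : Cg U V),
      (TensorProduct.map (Δ U W T).toLinearMap (LinearMap.id : Cg W V →ₗ[k] Cg W V))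
          (Δ U V W a) =
        (TensorProduct.assoc k (Cg U T) (Cg T W) (Cg W V)).symm
          ((TensorProduct.map (LinearMap.id : Cg U T →ₗ[k] Cg U T) (Δ T V W).toLinearMap)
            (Δ U V T a)))
    (U V W T : ι) (f : Cg U T →ₗ[k] A) (g : Cg T W →ₗ[k] A) (h : Cg W V →ₗ[k] A) :
    cgConv Δ U V W (cgConv Δ U W T f g) h = cgConv Δ U V T f (cgConv Δ T V W g h) := by
  ext a
  have step1 : ∀ t : Cg U W ⊗[k] Cg W V,
      LinearMap.mul' k A (TensorProduct.map (cgConv Δ U W T f g) h t)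
        = LinearMap.mul' k A
            (TensorProduct.map ((LinearMap.mul' k A) ∘ₗ TensorProduct.map f g) h
              ((TensorProduct.map (Δ U W T).toLinearMap
                (LinearMap.id : Cg W V →ₗ[k] Cg W V)) t)) := by
    intro t
    induction t using TensorProduct.induction_on with
    | zero => simp
    | tmul x y => simp [cgConv_apply]
    | add s t hs ht => simp [map_add, hs, ht]
  have step2 : ∀ t : Cg U T ⊗[k] Cg T V,
      LinearMap.mul' k A (TensorProduct.map f (cgConv Δ T V W g h) t)
        = LinearMap.mul' k A
            (TensorProduct.map f ((LinearMap.mul' k A) ∘ₗ TensorProduct.map g h)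
              ((TensorProduct.map (LinearMap.id : Cg U T →ₗ[k] Cg U T)
                (Δ T V W).toLinearMap) t)) := by
    intro t
    induction t using TensorProduct.induction_on with
    | zero => simp
    | tmul x y => simp [cgConv_apply]
    | add s t hs ht => simp [map_add, hs, ht]
  have step3 : ∀ t : Cg U T ⊗[k] (Cg T W ⊗[k] Cg W V),
      LinearMap.mul' k A
          (TensorProduct.map ((LinearMap.mul' k A) ∘ₗ TensorProduct.map f g) h
            ((TensorProduct.assoc k (Cg U T) (Cg T W) (Cg W V)).symm t))
        = LinearMap.mul' k A
            (TensorProduct.map f ((LinearMap.mul' k A) ∘ₗ TensorProduct.map g h) t) := by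
    intro t
    induction t using TensorProduct.induction_on with
    | zero => simp
    | tmul x s =>
      induction s using TensorProduct.induction_on with
      | zero => simp
      | tmul y z => simp [mul_assoc]
      | add s t hs ht => simp [tmul_add, map_add, hs, ht]
    | add s t hs ht => simp [map_add, hs, ht]
  rw [cgConv_apply Δ U V W, cgConv_apply Δ U V T, step1, hcoassoc U V W T a, step3, ← step2]

end Aux

section Antipode

variable {k : Type*} [Field k] {ι : Type*} {Cg : ι → ι → Type*}
  [∀ U V, Ring (Cg U V)] [∀ U V, Algebra k (Cg U V)]

lemma cogroupoid_antipode_delta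
    (Δ : ∀ U V W, Cg U V →ₐ[k] Cg U W ⊗[k] Cg W V)
    (εm : ∀ U, Cg U U →ₐ[k] k)
    (S : ∀ U V, Cg U V →ₗ[k] Cg V U)
    (hcoassoc : ∀ (U V W T : ι) (a : Cg U V),
      (TensorProduct.map (Δ U W T).toLinearMap (LinearMap.id : Cg W V →ₗ[k] Cg W V))
          (Δ U V W a) =
        (TensorProduct.assoc k (Cg U T) (Cg T W) (Cg W V)).symm
          ((TensorProduct.map (LinearMap.id : Cg U T →ₗ[k] Cg U T) (Δ T V W).toLinearMap)
            (Δ U V T a)))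
    (hcounitl : ∀ (U V : ι) (a : Cg U V),
      (TensorProduct.lid k (Cg U V))
        ((TensorProduct.map (εm U).toLinearMap (LinearMap.id : Cg U V →ₗ[k] Cg U V))
          (Δ U V U a)) = a)
    (hcounitr : ∀ (U V : ι) (a : Cg U V),
      (TensorProduct.rid k (Cg U V))
        ((TensorProduct.map (LinearMap.id : Cg U V →ₗ[k] Cg U V) (εm V).toLinearMap)
          (Δ U V V a)) = a)
    (hS₁ : ∀ (U V : ι) (a : Cg U U),
      (LinearMap.mul' k (Cg V U))
        ((TensorProduct.map (S U V) (LinearMap.id : Cg V U →ₗ[k] Cg V U)) (Δ U U V a)) =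
        εm U a • (1 : Cg V U))
    (hS₂ : ∀ (U V : ι) (a : Cg U U),
      (LinearMap.mul' k (Cg U V))
        ((TensorProduct.map (LinearMap.id : Cg U V →ₗ[k] Cg U V) (S V U)) (Δ U U V a)) =
        εm U a • (1 : Cg U V))
    (X Y Z : ι) :
    (Δ Y X Z).toLinearMap ∘ₗ (S X Y) =
      (TensorProduct.map (S Z Y) (S X Z)) ∘ₗ
        (TensorProduct.comm k (Cg X Z) (Cg Z Y)).toLinearMap ∘ₗ (Δ X Y Z).toLinearMap := by
  set F : Cg X Y →ₗ[k] Cg Y Z ⊗[k] Cg Z X := (Δ Y X Z).toLinearMap ∘ₗ (S X Y) with hF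
  set G : Cg X Y →ₗ[k] Cg Y Z ⊗[k] Cg Z X :=
    (TensorProduct.map (S Z Y) (S X Z)) ∘ₗ
      (TensorProduct.comm k (Cg X Z) (Cg Z Y)).toLinearMap ∘ₗ (Δ X Y Z).toLinearMap with hG
  set D : Cg Y X →ₗ[k] Cg Y Z ⊗[k] Cg Z X := (Δ Y X Z).toLinearMap with hD
  -- L3 : F is a left convolution inverse of D
  have L3 : cgConv Δ X X Y F D
      = (Algebra.linearMap k (Cg Y Z ⊗[k] Cg Z X)) ∘ₗ (εm X).toLinearMap := by
    ext a
    have key : ∀ t : Cg X Y ⊗[k] Cg Y X,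
        LinearMap.mul' k (Cg Y Z ⊗[k] Cg Z X) (TensorProduct.map F D t)
          = (Δ Y X Z) (LinearMap.mul' k (Cg Y X)
              ((TensorProduct.map (S X Y) (LinearMap.id : Cg Y X →ₗ[k] Cg Y X)) t)) := by
      intro t
      induction t using TensorProduct.induction_on with
      | zero => simp
      | tmul x y => simp [hF, hD, map_mul]
      | add s t hs ht => simp [map_add, hs, ht]
    rw [cgConv_apply, key, hS₁ X Y a]
    simp [Algebra.algebraMap_eq_smul_one]
  -- L4 : G is a right convolution inverse of D
  have L4 : cgConv Δ Y Y X D G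
      = (Algebra.linearMap k (Cg Y Z ⊗[k] Cg Z X)) ∘ₗ (εm Y).toLinearMap := by
    ext c
    set St : Cg X Z ⊗[k] Cg Z Y →ₗ[k] Cg Y Z ⊗[k] Cg Z X :=
      (TensorProduct.map (S Z Y) (S X Z)) ∘ₗ
        (TensorProduct.comm k (Cg X Z) (Cg Z Y)).toLinearMap with hSt
    have h0 : ∀ t : Cg Y X ⊗[k] Cg X Y,
        LinearMap.mul' k (Cg Y Z ⊗[k] Cg Z X) (TensorProduct.map D G t)
          = LinearMap.mul' k (Cg Y Z ⊗[k] Cg Z X)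
              ((TensorProduct.map D St)
                ((TensorProduct.map (LinearMap.id : Cg Y X →ₗ[k] Cg Y X)
                  (Δ X Y Z).toLinearMap) t)) := by
      intro t
      induction t using TensorProduct.induction_on with
      | zero => simp
      | tmul x y => simp [hG, hSt]
      | add s t hs ht => simp [map_add, hs, ht]
    have h1 : (TensorProduct.map (LinearMap.id : Cg Y X →ₗ[k] Cg Y X)
          (Δ X Y Z).toLinearMap) (Δ Y Y X c)
        = (TensorProduct.assoc k (Cg Y X) (Cg X Z) (Cg Z Y))
            ((TensorProduct.map (Δ Y Z X).toLinearMap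
              (LinearMap.id : Cg Z Y →ₗ[k] Cg Z Y)) (Δ Y Y Z c)) := by
      rw [hcoassoc Y Y Z X c, LinearEquiv.apply_symm_apply]
    have Theta : ∀ t : Cg Y Z ⊗[k] Cg Z Y,
        LinearMap.mul' k (Cg Y Z ⊗[k] Cg Z X)
            ((TensorProduct.map D St)
              ((TensorProduct.assoc k (Cg Y X) (Cg X Z) (Cg Z Y))
                ((TensorProduct.map (Δ Y Z X).toLinearMap
                  (LinearMap.id : Cg Z Y →ₗ[k] Cg Z Y)) t)))
          = (LinearMap.mul' k (Cg Y Z)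
              ((TensorProduct.map (LinearMap.id : Cg Y Z →ₗ[k] Cg Y Z) (S Z Y)) t))
              ⊗ₜ[k] (1 : Cg Z X) := by
      intro t
      induction t using TensorProduct.induction_on with
      | zero => simp
      | add u v hu hv => simp [map_add, TensorProduct.add_tmul, hu, hv]
      | tmul s q =>
        -- fix q, set g_q
        set gq : Cg X Z →ₗ[k] Cg Y Z ⊗[k] Cg Z X :=
          (TensorProduct.mk k (Cg Y Z) (Cg Z X) (S Z Y q)) ∘ₗ (S X Z) with hgq
        have sub1 : ∀ u : Cg Y X ⊗[k] Cg X Z,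
            LinearMap.mul' k (Cg Y Z ⊗[k] Cg Z X)
                ((TensorProduct.map D St)
                  ((TensorProduct.assoc k (Cg Y X) (Cg X Z) (Cg Z Y)) (u ⊗ₜ[k] q)))
              = LinearMap.mul' k (Cg Y Z ⊗[k] Cg Z X)
                  ((TensorProduct.map D gq) u) := by
          intro u
          induction u using TensorProduct.induction_on with
          | zero => simp
          | tmul u p => simp [hSt, hgq, hD]
          | add s t hs ht =>
            simp only [TensorProduct.add_tmul, map_add] at *
            rw [hs, ht]
        have decomp : TensorProduct.map D gq
            = (TensorProduct.map (LinearMap.id : Cg Y Z ⊗[k] Cg Z X →ₗ[k] Cg Y Z ⊗[k] Cg Z X) gq)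
                ∘ₗ (TensorProduct.map D (LinearMap.id : Cg X Z →ₗ[k] Cg X Z)) := by
          rw [← TensorProduct.map_comp, LinearMap.id_comp, LinearMap.comp_id]
        have sub3 : ∀ w : Cg Y Z ⊗[k] (Cg Z X ⊗[k] Cg X Z),
            LinearMap.mul' k (Cg Y Z ⊗[k] Cg Z X)
                ((TensorProduct.map
                  (LinearMap.id : Cg Y Z ⊗[k] Cg Z X →ₗ[k] Cg Y Z ⊗[k] Cg Z X) gq)
                  ((TensorProduct.assoc k (Cg Y Z) (Cg Z X) (Cg X Z)).symm w))
              = (TensorProduct.map (LinearMap.mulRight k (S Z Y q))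
                  ((LinearMap.mul' k (Cg Z X)) ∘ₗ
                    (TensorProduct.map (LinearMap.id : Cg Z X →ₗ[k] Cg Z X) (S X Z)))) w := by
          intro w
          induction w using TensorProduct.induction_on with
          | zero => simp
          | tmul v s' =>
            induction s' using TensorProduct.induction_on with
            | zero => simp
            | tmul w1 w2 =>
              simp [hgq, Algebra.TensorProduct.tmul_mul_tmul]
            | add s t hs ht =>
              simp only [TensorProduct.tmul_add, map_add] at *
              rw [hs, ht]
          | add s t hs ht => simp [map_add, hs, ht]
        have hinner : (LinearMap.mul' k (Cg Z X)) ∘ₗ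
              (TensorProduct.map (LinearMap.id : Cg Z X →ₗ[k] Cg Z X) (S X Z)) ∘ₗ
              (Δ Z Z X).toLinearMap
            = (Algebra.linearMap k (Cg Z X)) ∘ₗ (εm Z).toLinearMap := by
          apply LinearMap.ext
          intro w
          simp [hS₂ Z X w, Algebra.algebraMap_eq_smul_one]
        have decomp2 : TensorProduct.map (LinearMap.mulRight k (S Z Y q))
              ((LinearMap.mul' k (Cg Z X)) ∘ₗ
                (TensorProduct.map (LinearMap.id : Cg Z X →ₗ[k] Cg Z X) (S X Z)))
              ∘ₗ (TensorProduct.map (LinearMap.id : Cg Y Z →ₗ[k] Cg Y Z) (Δ Z Z X).toLinearMap)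
            = TensorProduct.map (LinearMap.mulRight k (S Z Y q))
                ((Algebra.linearMap k (Cg Z X)) ∘ₗ (εm Z).toLinearMap) := by
          rw [← TensorProduct.map_comp, LinearMap.comp_id, LinearMap.comp_assoc, hinner]
        have sub5 : ∀ t : Cg Y Z ⊗[k] Cg Z Z,
            (TensorProduct.map (LinearMap.mulRight k (S Z Y q))
              ((Algebra.linearMap k (Cg Z X)) ∘ₗ (εm Z).toLinearMap)) t
            = ((TensorProduct.rid k (Cg Y Z))
                ((TensorProduct.map (LinearMap.id : Cg Y Z →ₗ[k] Cg Y Z)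
                  (εm Z).toLinearMap) t) * S Z Y q) ⊗ₜ[k] (1 : Cg Z X) := by
          intro t
          induction t using TensorProduct.induction_on with
          | zero => simp
          | tmul v w =>
            simp [Algebra.algebraMap_eq_smul_one, TensorProduct.tmul_smul,
              TensorProduct.smul_tmul', smul_mul_assoc]
          | add s t hs ht => simp [map_add, TensorProduct.add_tmul, add_mul, hs, ht]
        -- assemble the tmul case
        have e1 : (TensorProduct.map (Δ Y Z X).toLinearMap
            (LinearMap.id : Cg Z Y →ₗ[k] Cg Z Y)) (s ⊗ₜ[k] q) = (Δ Y Z X s) ⊗ₜ[k] q := by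
          simp
        rw [e1, sub1 (Δ Y Z X s), decomp, LinearMap.comp_apply]
        have e2 : (TensorProduct.map D (LinearMap.id : Cg X Z →ₗ[k] Cg X Z)) (Δ Y Z X s)
            = (TensorProduct.assoc k (Cg Y Z) (Cg Z X) (Cg X Z)).symm
                ((TensorProduct.map (LinearMap.id : Cg Y Z →ₗ[k] Cg Y Z)
                  (Δ Z Z X).toLinearMap) (Δ Y Z Z s)) := hcoassoc Y Z X Z s
        rw [e2, sub3, ← LinearMap.comp_apply, decomp2, sub5, hcounitr Y Z s]
        simp
    rw [cgConv_apply, h0, h1, Theta, hS₂ Y Z c]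
    simp [Algebra.algebraMap_eq_smul_one, TensorProduct.smul_tmul',
      Algebra.TensorProduct.one_def]
  -- sandwich
  have s1 : cgConv Δ X Y Y F
      ((Algebra.linearMap k (Cg Y Z ⊗[k] Cg Z X)) ∘ₗ (εm Y).toLinearMap) = F :=
    cgConv_unit_right Δ εm hcounitr X Y F
  have s2 : cgConv Δ X Y X
      ((Algebra.linearMap k (Cg Y Z ⊗[k] Cg Z X)) ∘ₗ (εm X).toLinearMap) G = G :=
    cgConv_unit_left Δ εm hcounitl X Y G
  calc F = cgConv Δ X Y Y F
        ((Algebra.linearMap k (Cg Y Z ⊗[k] Cg Z X)) ∘ₗ (εm Y).toLinearMap) := s1.symm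
    _ = cgConv Δ X Y Y F (cgConv Δ Y Y X D G) := by rw [L4]
    _ = cgConv Δ X Y X (cgConv Δ X X Y F D) G :=
        (cgConv_assoc Δ hcoassoc X Y X Y F D G).symm
    _ = cgConv Δ X Y X
        ((Algebra.linearMap k (Cg Y Z ⊗[k] Cg Z X)) ∘ₗ (εm X).toLinearMap) G := by rw [L3]
    _ = G := s2

end Antipode

/-- in a cogroupoid `C`, for objects `X, Y`, the map
`S_{Y,X} ∘ S_{X,Y} : C(X,Y) → C(X,Y)` is left semi-`C(X,X)`-colinear with respect
to `S_{X,X}²`, i.e. `Δ_{X,Y}^X (S_{Y,X}(S_{X,Y}(a))) = (S_{X,X}² ⊗ S_{Y,X}S_{X,Y})(Δ_{X,Y}^X(a))`.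

The cogroupoid is encoded by its objects `ι`, algebras `Cg U V`, comultiplications
`Δ U V W : Cg U V → Cg U W ⊗ Cg W V`, counits `εm U : Cg U U → k`, and antipodes
`S U V : Cg U V → Cg V U`, subject to the coassociativity, counit and antipode axioms. -/
theorem cogroupoid_double_antipode_semicolinear
    {k : Type*} [Field k] {ι : Type*} (Cg : ι → ι → Type*)
    [∀ U V, Ring (Cg U V)] [∀ U V, Algebra k (Cg U V)]
    (Δ : ∀ U V W, Cg U V →ₐ[k] Cg U W ⊗[k] Cg W V)
    (εm : ∀ U, Cg U U →ₐ[k] k)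
    (S : ∀ U V, Cg U V →ₗ[k] Cg V U)
    -- coassociativity
    (hcoassoc : ∀ (U V W T : ι) (a : Cg U V),
      (TensorProduct.map (Δ U W T).toLinearMap (LinearMap.id : Cg W V →ₗ[k] Cg W V))
          (Δ U V W a) =
        (TensorProduct.assoc k (Cg U T) (Cg T W) (Cg W V)).symm
          ((TensorProduct.map (LinearMap.id : Cg U T →ₗ[k] Cg U T) (Δ T V W).toLinearMap)
            (Δ U V T a)))
    -- left counit axiom
    (hcounitl : ∀ (U V : ι) (a : Cg U V),
      (TensorProduct.lid k (Cg U V))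
        ((TensorProduct.map (εm U).toLinearMap (LinearMap.id : Cg U V →ₗ[k] Cg U V))
          (Δ U V U a)) = a)
    -- right counit axiom
    (hcounitr : ∀ (U V : ι) (a : Cg U V),
      (TensorProduct.rid k (Cg U V))
        ((TensorProduct.map (LinearMap.id : Cg U V →ₗ[k] Cg U V) (εm V).toLinearMap)
          (Δ U V V a)) = a)
    -- antipode axioms
    (hS₁ : ∀ (U V : ι) (a : Cg U U),
      (LinearMap.mul' k (Cg V U))
        ((TensorProduct.map (S U V) (LinearMap.id : Cg V U →ₗ[k] Cg V U)) (Δ U U V a)) =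
        εm U a • (1 : Cg V U))
    (hS₂ : ∀ (U V : ι) (a : Cg U U),
      (LinearMap.mul' k (Cg U V))
        ((TensorProduct.map (LinearMap.id : Cg U V →ₗ[k] Cg U V) (S V U)) (Δ U U V a)) =
        εm U a • (1 : Cg U V))
    (X Y : ι) :
    ∀ a : Cg X Y,
      Δ X Y X ((S Y X) ((S X Y) a)) =
        (TensorProduct.map ((S X X) ∘ₗ (S X X)) ((S Y X) ∘ₗ (S X Y))) (Δ X Y X a) := by
  intro a
  have key := cogroupoid_antipode_delta Δ εm S hcoassoc hcounitl hcounitr hS₁ hS₂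
  have h1 := LinearMap.congr_fun (key Y X X) (S X Y a)
  have h2 := LinearMap.congr_fun (key X Y X) a
  simp only [LinearMap.coe_comp, Function.comp_apply, AlgHom.toLinearMap_apply,
    LinearEquiv.coe_coe] at h1 h2
  rw [h1, h2]
  have final : ∀ t : Cg X X ⊗[k] Cg X Y,
      (TensorProduct.map (S X X) (S Y X))
          ((TensorProduct.comm k (Cg Y X) (Cg X X))
            ((TensorProduct.map (S X Y) (S X X))
              ((TensorProduct.comm k (Cg X X) (Cg X Y)) t)))
        = (TensorProduct.map ((S X X) ∘ₗ (S X X)) ((S Y X) ∘ₗ (S X Y))) t := by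
    intro t
    induction t using TensorProduct.induction_on with
    | zero => simp
    | tmul x y => simp
    | add s t hs ht => simp [map_add, hs, ht]
  exact final _
end

section
/- Let C be a cogroupoid with objects X, Y, set A = C(X,X), R = C(X,Y), and let ψ : R → k be linear. If ψ is a twisted trace with respect to an algebra automorphism σ of R (ψ(xy) = ψ(yσ(x))), then the algebra automorphism θ := σ⁻¹ ∘ S_{Y,X} ∘ S_{X,Y} satisfies ψ(θ(a^{[1]}) x a^{[2]}) = ε(a)ψ(x) for all a ∈ A, x ∈ R, where a^{[1]} ⊗ a^{[2]} = a_{(1)}^{XY} ⊗ S_{Y,X}(a_{(2)}^{YX}). -/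
open TensorProduct

set_option maxHeartbeats 1000000
set_option synthInstance.maxHeartbeats 400000

section CogroupoidAux

variable {k : Type*} [Field k] {ι : Type*} {Cg : ι → ι → Type*}
  [∀ U V, Ring (Cg U V)] [∀ U V, Algebra k (Cg U V)]

private theorem cogroupoid_S_one
    (Δ : ∀ U V W, Cg U V →ₐ[k] Cg U W ⊗[k] Cg W V)
    (εm : ∀ U, Cg U U →ₐ[k] k)
    (S : ∀ U V, Cg U V →ₗ[k] Cg V U)
    (hS₁ : ∀ (U V : ι) (a : Cg U U),
      (LinearMap.mul' k (Cg V U))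
        ((TensorProduct.map (S U V) (LinearMap.id : Cg V U →ₗ[k] Cg V U)) (Δ U U V a)) =
        εm U a • (1 : Cg V U))
    (P Q : ι) : S P Q (1 : Cg P Q) = 1 := by
  have h := hS₁ P Q 1
  rw [map_one (Δ P P Q), Algebra.TensorProduct.one_def] at h
  simpa using h

private theorem cogroupoid_S_antimul
    (Δ : ∀ U V W, Cg U V →ₐ[k] Cg U W ⊗[k] Cg W V)
    (εm : ∀ U, Cg U U →ₐ[k] k)
    (S : ∀ U V, Cg U V →ₗ[k] Cg V U)
    (hcoassoc : ∀ (U V W T : ι) (a : Cg U V),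
      (TensorProduct.map (Δ U W T).toLinearMap (LinearMap.id : Cg W V →ₗ[k] Cg W V))
          (Δ U V W a) =
        (TensorProduct.assoc k (Cg U T) (Cg T W) (Cg W V)).symm
          ((TensorProduct.map (LinearMap.id : Cg U T →ₗ[k] Cg U T) (Δ T V W).toLinearMap)
            (Δ U V T a)))
    (hcounitl : ∀ (U V : ι) (a : Cg U V),
      (TensorProduct.lid k (Cg U V))
        ((TensorProduct.map (εm U).toLinearMap (LinearMap.id : Cg U V →ₗ[k] Cg U V))
          (Δ U V U a)) = a)
    (hcounitr : ∀ (U V : ι) (a : Cg U V),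
      (TensorProduct.rid k (Cg U V))
        ((TensorProduct.map (LinearMap.id : Cg U V →ₗ[k] Cg U V) (εm V).toLinearMap)
          (Δ U V V a)) = a)
    (hS₁ : ∀ (U V : ι) (a : Cg U U),
      (LinearMap.mul' k (Cg V U))
        ((TensorProduct.map (S U V) (LinearMap.id : Cg V U →ₗ[k] Cg V U)) (Δ U U V a)) =
        εm U a • (1 : Cg V U))
    (hS₂ : ∀ (U V : ι) (a : Cg U U),
      (LinearMap.mul' k (Cg U V))
        ((TensorProduct.map (LinearMap.id : Cg U V →ₗ[k] Cg U V) (S V U)) (Δ U U V a)) =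
        εm U a • (1 : Cg U V))
    (P Q : ι) (u v : Cg P Q) :
    S P Q (u * v) = S P Q v * S P Q u := by
  set Φ : Cg P Q ⊗[k] Cg Q P →ₗ[k] Cg Q P :=
    LinearMap.mul' k (Cg Q P) ∘ₗ TensorProduct.map (S P Q) LinearMap.id with hΦ
  set F : Cg Q P ⊗[k] Cg P Q →ₗ[k] Cg Q P :=
    LinearMap.mul' k (Cg Q P) ∘ₗ TensorProduct.map LinearMap.id (S P Q) with hF
  set ρ : Cg P Q ⊗[k] Cg P Q →ₗ[k] Cg Q P :=
    LinearMap.mul' k (Cg Q P) ∘ₗ TensorProduct.map (S P Q) (S P Q) ∘ₗ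
      (TensorProduct.comm k (Cg P Q) (Cg P Q)).toLinearMap with hρ
  set W : (Cg Q P ⊗[k] Cg P Q) ⊗[k] (Cg Q P ⊗[k] Cg P Q) →ₗ[k] Cg Q P :=
    LinearMap.mul' k (Cg Q P) ∘ₗ
      TensorProduct.map (LinearMap.mul' k (Cg Q P) ∘ₗ TensorProduct.map LinearMap.id F)
        (S P Q) ∘ₗ
      (TensorProduct.assoc k (Cg Q P) (Cg Q P ⊗[k] Cg P Q) (Cg P Q)).symm.toLinearMap ∘ₗ
      TensorProduct.map LinearMap.id
        (TensorProduct.comm k (Cg P Q) (Cg Q P ⊗[k] Cg P Q)).toLinearMap ∘ₗ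
      (TensorProduct.assoc k (Cg Q P) (Cg P Q) (Cg Q P ⊗[k] Cg P Q)).toLinearMap with hW
  set Θ : ((Cg P Q ⊗[k] Cg Q P) ⊗[k] Cg P Q) ⊗[k] ((Cg P Q ⊗[k] Cg Q P) ⊗[k] Cg P Q)
      →ₗ[k] Cg Q P :=
    LinearMap.mul' k (Cg Q P) ∘ₗ
      TensorProduct.map (Φ ∘ₗ LinearMap.mul' k (Cg P Q ⊗[k] Cg Q P)) ρ ∘ₗ
      (TensorProduct.tensorTensorTensorComm k (Cg P Q ⊗[k] Cg Q P) (Cg P Q)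
        (Cg P Q ⊗[k] Cg Q P) (Cg P Q)).toLinearMap with hΘ
  have Φap : ∀ (p : Cg P Q) (r : Cg Q P), Φ (p ⊗ₜ r) = S P Q p * r := by
    intro p r; simp [hΦ]
  have Fap : ∀ (r : Cg Q P) (p : Cg P Q), F (r ⊗ₜ p) = r * S P Q p := by
    intro r p; simp [hF]
  have ρap : ∀ (p q : Cg P Q), ρ (p ⊗ₜ q) = S P Q q * S P Q p := by
    intro p q; simp [hρ]
  have Wap : ∀ (r : Cg Q P) (p₃ : Cg P Q) (β : Cg Q P ⊗[k] Cg P Q),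
      W ((r ⊗ₜ p₃) ⊗ₜ β) = r * F β * S P Q p₃ := by
    intro r p₃ β; simp [hW]
  have Θap : ∀ (β : Cg P Q ⊗[k] Cg Q P) (p : Cg P Q) (γ : Cg P Q ⊗[k] Cg Q P) (q : Cg P Q),
      Θ ((β ⊗ₜ p) ⊗ₜ (γ ⊗ₜ q)) = Φ (β * γ) * (S P Q q * S P Q p) := by
    intro β p γ q; simp [hΘ, ρap]
  have ΦΔ : ∀ (b : Cg P P), Φ ((Δ P P Q) b) = εm P b • 1 := by
    intro b; simpa [hΦ] using hS₁ P Q b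
  have FΔ : ∀ (a' : Cg Q Q), F ((Δ Q Q P) a') = εm Q a' • 1 := by
    intro a'; simpa [hF] using hS₂ Q P a'
  -- step (i): evaluation via the antipode axiom on the left legs
  have e1 : ∀ (t s : Cg P P ⊗[k] Cg P Q),
      Θ ((TensorProduct.map (Δ P P Q).toLinearMap
            (LinearMap.id : Cg P Q →ₗ[k] Cg P Q)) t ⊗ₜ
         (TensorProduct.map (Δ P P Q).toLinearMap
            (LinearMap.id : Cg P Q →ₗ[k] Cg P Q)) s) =
      ρ ((TensorProduct.lid k (Cg P Q))
            ((TensorProduct.map (εm P).toLinearMap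
              (LinearMap.id : Cg P Q →ₗ[k] Cg P Q)) t) ⊗ₜ
         (TensorProduct.lid k (Cg P Q))
            ((TensorProduct.map (εm P).toLinearMap
              (LinearMap.id : Cg P Q →ₗ[k] Cg P Q)) s)) := by
    intro t s
    induction t using TensorProduct.induction_on with
    | zero => simp only [map_zero, zero_tmul]
    | add t₁ t₂ ih₁ ih₂ => simp only [map_add, add_tmul, ih₁, ih₂]
    | tmul b p =>
      induction s using TensorProduct.induction_on with
      | zero => simp only [map_zero, tmul_zero]
      | add s₁ s₂ ih₁ ih₂ => simp only [map_add, tmul_add, ih₁, ih₂]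
      | tmul c q =>
        simp only [map_tmul, LinearMap.id_coe, id_eq, AlgHom.toLinearMap_apply,
          lid_tmul]
        rw [Θap, ← map_mul (Δ P P Q) b c, ΦΔ, ρap, map_smul, map_smul]
        simp only [smul_mul_assoc, mul_smul_comm, one_mul, map_mul, mul_smul]
  -- step (B): collapsing the inner right legs
  have eB : ∀ (α : Cg Q P ⊗[k] Cg P Q) (a' : Cg Q Q),
      W (α ⊗ₜ ((Δ Q Q P) a')) = εm Q a' • F α := by
    intro α a'
    induction α using TensorProduct.induction_on with
    | zero => simp only [zero_tmul, map_zero, smul_zero]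
    | add α₁ α₂ ih₁ ih₂ => simp only [add_tmul, map_add, ih₁, ih₂, smul_add]
    | tmul r p₃ =>
      rw [Wap, FΔ, Fap, mul_smul_comm, mul_one, smul_mul_assoc]
  -- step (A): evaluating Θ after reassociation
  have eA : ∀ (p q : Cg P Q) (α β : Cg Q P ⊗[k] Cg P Q),
      Θ ((TensorProduct.assoc k (Cg P Q) (Cg Q P) (Cg P Q)).symm (p ⊗ₜ α) ⊗ₜ
         (TensorProduct.assoc k (Cg P Q) (Cg Q P) (Cg P Q)).symm (q ⊗ₜ β)) =
      S P Q (p * q) * W (α ⊗ₜ β) := by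
    intro p q α β
    induction α using TensorProduct.induction_on with
    | zero => simp only [tmul_zero, map_zero, zero_tmul, mul_zero]
    | add α₁ α₂ ih₁ ih₂ => simp only [tmul_add, map_add, add_tmul, ih₁, ih₂, mul_add]
    | tmul r p₃ =>
      induction β using TensorProduct.induction_on with
      | zero => simp only [tmul_zero, map_zero, mul_zero]
      | add β₁ β₂ ih₁ ih₂ => simp only [tmul_add, map_add, ih₁, ih₂, mul_add]
      | tmul r' q₃ =>
        rw [assoc_symm_tmul, assoc_symm_tmul, Θap, Algebra.TensorProduct.tmul_mul_tmul,
          Φap, Wap, Fap]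
        simp only [mul_assoc]
  -- step (ii): the other evaluation
  have e2 : ∀ (t s : Cg P Q ⊗[k] Cg Q Q),
      Θ ((TensorProduct.assoc k (Cg P Q) (Cg Q P) (Cg P Q)).symm
            ((TensorProduct.map (LinearMap.id : Cg P Q →ₗ[k] Cg P Q)
              (Δ Q Q P).toLinearMap) t) ⊗ₜ
         (TensorProduct.assoc k (Cg P Q) (Cg Q P) (Cg P Q)).symm
            ((TensorProduct.map (LinearMap.id : Cg P Q →ₗ[k] Cg P Q)
              (Δ Q Q P).toLinearMap) s)) =
      S P Q ((TensorProduct.rid k (Cg P Q))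
            ((TensorProduct.map (LinearMap.id : Cg P Q →ₗ[k] Cg P Q)
              (εm Q).toLinearMap) t) *
          (TensorProduct.rid k (Cg P Q))
            ((TensorProduct.map (LinearMap.id : Cg P Q →ₗ[k] Cg P Q)
              (εm Q).toLinearMap) s)) := by
    intro t s
    induction t using TensorProduct.induction_on with
    | zero => simp only [map_zero, zero_tmul, zero_mul]
    | add t₁ t₂ ih₁ ih₂ => simp only [map_add, add_tmul, add_mul, ih₁, ih₂]
    | tmul p a =>
      induction s using TensorProduct.induction_on with
      | zero => simp only [map_zero, tmul_zero, mul_zero]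
      | add s₁ s₂ ih₁ ih₂ => simp only [map_add, tmul_add, mul_add, ih₁, ih₂]
      | tmul q a' =>
        simp only [map_tmul, LinearMap.id_coe, id_eq, AlgHom.toLinearMap_apply, rid_tmul]
        rw [eA, eB, FΔ]
        simp only [smul_mul_assoc, mul_smul_comm, mul_one, map_smul]
  -- put everything together
  have h1 := hcoassoc P Q P Q u
  have h2 := hcoassoc P Q P Q v
  have main := e2 ((Δ P Q Q) u) ((Δ P Q Q) v)
  rw [← h1, ← h2] at main
  rw [e1 ((Δ P Q P) u) ((Δ P Q P) v)] at main
  rw [hcounitl P Q u, hcounitl P Q v, hcounitr P Q u, hcounitr P Q v, ρap] at main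
  exact main.symm

end CogroupoidAux

/-- in a cogroupoid `C` with `A = C(X,X)`, `R = C(X,Y)`, if
`ψ : R → k` is a twisted trace with respect to an algebra automorphism `σ` of `R`,
then `θ := σ⁻¹ ∘ S_{Y,X} ∘ S_{X,Y}` satisfies `ψ(θ(a⁽¹⁾) x a⁽²⁾) = ε(a) ψ(x)`
for all `a ∈ A`, `x ∈ R`, where `a⁽¹⁾ ⊗ a⁽²⁾ = a₍₁₎^{XY} ⊗ S_{Y,X}(a₍₂₎^{YX})`. -/
theorem cogroupoid_twisted_trace_to_MU
    {k : Type*} [Field k] {ι : Type*} (Cg : ι → ι → Type*)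
    [∀ U V, Ring (Cg U V)] [∀ U V, Algebra k (Cg U V)]
    (Δ : ∀ U V W, Cg U V →ₐ[k] Cg U W ⊗[k] Cg W V)
    (εm : ∀ U, Cg U U →ₐ[k] k)
    (S : ∀ U V, Cg U V →ₗ[k] Cg V U)
    -- coassociativity
    (hcoassoc : ∀ (U V W T : ι) (a : Cg U V),
      (TensorProduct.map (Δ U W T).toLinearMap (LinearMap.id : Cg W V →ₗ[k] Cg W V))
          (Δ U V W a) =
        (TensorProduct.assoc k (Cg U T) (Cg T W) (Cg W V)).symm
          ((TensorProduct.map (LinearMap.id : Cg U T →ₗ[k] Cg U T) (Δ T V W).toLinearMap)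
            (Δ U V T a)))
    -- left counit axiom
    (hcounitl : ∀ (U V : ι) (a : Cg U V),
      (TensorProduct.lid k (Cg U V))
        ((TensorProduct.map (εm U).toLinearMap (LinearMap.id : Cg U V →ₗ[k] Cg U V))
          (Δ U V U a)) = a)
    -- right counit axiom
    (hcounitr : ∀ (U V : ι) (a : Cg U V),
      (TensorProduct.rid k (Cg U V))
        ((TensorProduct.map (LinearMap.id : Cg U V →ₗ[k] Cg U V) (εm V).toLinearMap)
          (Δ U V V a)) = a)
    -- antipode axioms
    (hS₁ : ∀ (U V : ι) (a : Cg U U),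
      (LinearMap.mul' k (Cg V U))
        ((TensorProduct.map (S U V) (LinearMap.id : Cg V U →ₗ[k] Cg V U)) (Δ U U V a)) =
        εm U a • (1 : Cg V U))
    (hS₂ : ∀ (U V : ι) (a : Cg U U),
      (LinearMap.mul' k (Cg U V))
        ((TensorProduct.map (LinearMap.id : Cg U V →ₗ[k] Cg U V) (S V U)) (Δ U U V a)) =
        εm U a • (1 : Cg U V))
    (X Y : ι)
    (ψ : Cg X Y →ₗ[k] k) (σ : Cg X Y ≃ₐ[k] Cg X Y)
    (htrace : ∀ x y : Cg X Y, ψ (x * y) = ψ (y * σ x)) :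
    let θL : Cg X Y →ₗ[k] Cg X Y :=
      σ.symm.toLinearMap ∘ₗ (S Y X) ∘ₗ (S X Y)
    ∀ (a : Cg X X) (x : Cg X Y),
      ψ ((LinearMap.mul' k (Cg X Y))
        ((TensorProduct.map (LinearMap.mulRight k x) (LinearMap.id : Cg X Y →ₗ[k] Cg X Y))
          ((TensorProduct.map θL (S Y X)) (Δ X X Y a)))) = εm X a * ψ x := by
  intro θL a x
  have anti : ∀ u v : Cg Y X, S Y X (u * v) = S Y X v * S Y X u :=
    cogroupoid_S_antimul Δ εm S hcoassoc hcounitl hcounitr hS₁ hS₂ Y X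
  have Sone : S Y X (1 : Cg Y X) = 1 := cogroupoid_S_one Δ εm S hS₁ Y X
  have M : ∀ t : Cg X Y ⊗[k] Cg Y X,
      ψ ((LinearMap.mul' k (Cg X Y))
        ((TensorProduct.map (LinearMap.mulRight k x) (LinearMap.id : Cg X Y →ₗ[k] Cg X Y))
          ((TensorProduct.map θL (S Y X)) t))) =
      ψ (x * S Y X ((LinearMap.mul' k (Cg Y X))
          ((TensorProduct.map (S X Y) (LinearMap.id : Cg Y X →ₗ[k] Cg Y X)) t))) := by
    intro t
    induction t using TensorProduct.induction_on with
    | zero => simp only [map_zero, mul_zero]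
    | add t₁ t₂ ih₁ ih₂ => simp only [map_add, mul_add, ih₁, ih₂]
    | tmul a₁ a₂ =>
      simp only [map_tmul, LinearMap.mul'_apply, LinearMap.mulRight_apply,
        LinearMap.id_coe, id_eq]
      rw [anti (S X Y a₁) a₂, mul_assoc, htrace (θL a₁) (x * S Y X a₂)]
      have hσ : σ (θL a₁) = S Y X (S X Y a₁) := σ.apply_symm_apply _
      rw [hσ, mul_assoc]
  rw [M ((Δ X X Y) a), hS₁ X Y a, map_smul, Sone, mul_smul_comm, mul_one, map_smul,
    smul_eq_mul]
end

section
/- Let C be a cogroupoid with objects X, Y, set A = C(X,X), R = C(X,Y), and let ψ : R → k be linear. If there exists an algebra automorphism θ of R such that ψ(θ(a^{[1]}) x a^{[2]}) = ε(a)ψ(x) for all a ∈ A and x ∈ R (where a^{[1]} ⊗ a^{[2]} = a_{(1)}^{XY} ⊗ S_{Y,X}(a_{(2)}^{YX})), then ψ is a twisted trace with respect to σ := S_{Y,X} ∘ S_{X,Y} ∘ θ⁻¹, i.e. ψ(xy) = ψ(yσ(x)) for all x, y ∈ R. -/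
open TensorProduct

section aux

variable {k : Type*} [Field k] {ι : Type*} {Cg : ι → ι → Type*}
  [∀ U V, Ring (Cg U V)] [∀ U V, Algebra k (Cg U V)]
  (Δ : ∀ U V W, Cg U V →ₐ[k] Cg U W ⊗[k] Cg W V)

/-- Build a trilinear map from a raw function with linearity proofs. -/
def triLin {A B C M : Type*} [AddCommMonoid A] [AddCommMonoid B] [AddCommMonoid C]
    [AddCommMonoid M] [Module k A] [Module k B] [Module k C] [Module k M]
    (Φ : A → B → C → M)
    (hΦa : ∀ a a' b c, Φ (a + a') b c = Φ a b c + Φ a' b c)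
    (hΦas : ∀ (r : k) a b c, Φ (r • a) b c = r • Φ a b c)
    (hΦb : ∀ a b b' c, Φ a (b + b') c = Φ a b c + Φ a b' c)
    (hΦbs : ∀ (r : k) a b c, Φ a (r • b) c = r • Φ a b c)
    (hΦc : ∀ a b c c', Φ a b (c + c') = Φ a b c + Φ a b c')
    (hΦcs : ∀ (r : k) a b c, Φ a b (r • c) = r • Φ a b c) :
    A →ₗ[k] B →ₗ[k] C →ₗ[k] M where
  toFun a :=
    { toFun := fun b =>
        { toFun := Φ a b
          map_add' := hΦc a b
          map_smul' := fun r c => hΦcs r a b c }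
      map_add' := fun b b' => LinearMap.ext fun c => hΦb a b b' c
      map_smul' := fun r b => LinearMap.ext fun c => hΦbs r a b c }
  map_add' := fun a a' => LinearMap.ext fun b => LinearMap.ext fun c => hΦa a a' b c
  map_smul' := fun r a => LinearMap.ext fun b => LinearMap.ext fun c => hΦas r a b c

set_option synthInstance.maxHeartbeats 400000 in
theorem tripleExchange
    (hcoassoc : ∀ (U V W T : ι) (a : Cg U V),
      (TensorProduct.map (Δ U W T).toLinearMap (LinearMap.id : Cg W V →ₗ[k] Cg W V))
          (Δ U V W a) =
        (TensorProduct.assoc k (Cg U T) (Cg T W) (Cg W V)).symm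
          ((TensorProduct.map (LinearMap.id : Cg U T →ₗ[k] Cg U T) (Δ T V W).toLinearMap)
            (Δ U V T a)))
    (U V : ι) (u : Cg U V)
    {M : Type*} [AddCommMonoid M] [Module k M]
    (Φ : Cg U V →ₗ[k] Cg V U →ₗ[k] Cg U V →ₗ[k] M)
    (s : Finset (Cg U V × Cg V V)) (hs : Δ U V V u = ∑ p ∈ s, p.1 ⊗ₜ p.2)
    (t : (Cg U V × Cg V V) → Finset (Cg V U × Cg U V))
    (ht : ∀ p, Δ V V U p.2 = ∑ q ∈ t p, q.1 ⊗ₜ q.2)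
    (s' : Finset (Cg U U × Cg U V)) (hs' : Δ U V U u = ∑ r ∈ s', r.1 ⊗ₜ r.2)
    (t' : (Cg U U × Cg U V) → Finset (Cg U V × Cg V U))
    (ht' : ∀ r, Δ U U V r.1 = ∑ w ∈ t' r, w.1 ⊗ₜ w.2) :
    ∑ p ∈ s, ∑ q ∈ t p, Φ p.1 q.1 q.2 = ∑ r ∈ s', ∑ w ∈ t' r, Φ w.1 w.2 r.2 := by
  have h := congrArg (TensorProduct.lift (TensorProduct.lift Φ)) (hcoassoc U V U V u)
  rw [hs, hs'] at h
  simp only [map_sum, LinearEquiv.coe_coe, TensorProduct.map_tmul, LinearMap.id_coe, id_eq,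
    AlgHom.toLinearMap_apply, ht, ht',
    TensorProduct.sum_tmul, TensorProduct.tmul_sum, TensorProduct.assoc_symm_tmul,
    TensorProduct.lift.tmul] at h
  exact h.symm

theorem S_antimul
    (εm : ∀ U, Cg U U →ₐ[k] k)
    (S : ∀ U V, Cg U V →ₗ[k] Cg V U)
    (hcoassoc : ∀ (U V W T : ι) (a : Cg U V),
      (TensorProduct.map (Δ U W T).toLinearMap (LinearMap.id : Cg W V →ₗ[k] Cg W V))
          (Δ U V W a) =
        (TensorProduct.assoc k (Cg U T) (Cg T W) (Cg W V)).symm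
          ((TensorProduct.map (LinearMap.id : Cg U T →ₗ[k] Cg U T) (Δ T V W).toLinearMap)
            (Δ U V T a)))
    (hcounitl : ∀ (U V : ι) (a : Cg U V),
      (TensorProduct.lid k (Cg U V))
        ((TensorProduct.map (εm U).toLinearMap (LinearMap.id : Cg U V →ₗ[k] Cg U V))
          (Δ U V U a)) = a)
    (hcounitr : ∀ (U V : ι) (a : Cg U V),
      (TensorProduct.rid k (Cg U V))
        ((TensorProduct.map (LinearMap.id : Cg U V →ₗ[k] Cg U V) (εm V).toLinearMap)
          (Δ U V V a)) = a)
    (hS₁ : ∀ (U V : ι) (a : Cg U U),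
      (LinearMap.mul' k (Cg V U))
        ((TensorProduct.map (S U V) (LinearMap.id : Cg V U →ₗ[k] Cg V U)) (Δ U U V a)) =
        εm U a • (1 : Cg V U))
    (hS₂ : ∀ (U V : ι) (a : Cg U U),
      (LinearMap.mul' k (Cg U V))
        ((TensorProduct.map (LinearMap.id : Cg U V →ₗ[k] Cg U V) (S V U)) (Δ U U V a)) =
        εm U a • (1 : Cg U V))
    (U V : ι) (a b : Cg U V) :
    S U V (a * b) = S U V b * S U V a := by
  classical
  obtain ⟨sa, hsa⟩ := TensorProduct.exists_finset (Δ U V V a)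
  choose ta hta using fun p : Cg U V × Cg V V => TensorProduct.exists_finset (Δ V V U p.2)
  obtain ⟨sa', hsa'⟩ := TensorProduct.exists_finset (Δ U V U a)
  choose ta' hta' using fun r : Cg U U × Cg U V => TensorProduct.exists_finset (Δ U U V r.1)
  obtain ⟨sb, hsb⟩ := TensorProduct.exists_finset (Δ U V V b)
  obtain ⟨sb', hsb'⟩ := TensorProduct.exists_finset (Δ U V U b)
  -- counit facts
  have hcra : ∑ p ∈ sa, εm V p.2 • p.1 = a := by
    have h := hcounitr U V a
    rw [hsa] at h
    simpa [map_sum, TensorProduct.rid_tmul] using h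
  have hcrb : ∑ P ∈ sb, εm V P.2 • P.1 = b := by
    have h := hcounitr U V b
    rw [hsb] at h
    simpa [map_sum, TensorProduct.rid_tmul] using h
  have hcla : ∑ r ∈ sa', εm U r.1 • r.2 = a := by
    have h := hcounitl U V a
    rw [hsa'] at h
    simpa [map_sum, TensorProduct.lid_tmul] using h
  have hclb : ∑ r ∈ sb', εm U r.1 • r.2 = b := by
    have h := hcounitl U V b
    rw [hsb'] at h
    simpa [map_sum, TensorProduct.lid_tmul] using h
  -- antipode facts
  have hwa : ∀ r : Cg U U × Cg U V, ∑ w ∈ ta' r, S U V w.1 * w.2 = εm U r.1 • (1 : Cg V U) := by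
    intro r
    have h := hS₁ U V r.1
    rw [hta' r] at h
    simpa [map_sum, LinearMap.mul'_apply] using h
  have hwb : ∀ r : Cg U U × Cg U V, ∑ w ∈ ta' r, S U V w.1 * w.2 = εm U r.1 • (1 : Cg V U) :=
    hwa
  have hmix : ∀ p P : Cg U V × Cg V V,
      ∑ q ∈ ta p, ∑ Q ∈ ta P, q.1 * Q.1 * S U V (q.2 * Q.2)
        = (εm V p.2 * εm V P.2) • (1 : Cg V U) := by
    intro p P
    have h := hS₂ V U (p.2 * P.2)
    rw [map_mul, hta p, hta P, Finset.sum_mul_sum] at h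
    simp only [Algebra.TensorProduct.tmul_mul_tmul] at h
    simpa [map_sum, LinearMap.mul'_apply, map_mul] using h
  symm
  calc S U V b * S U V a
      = (∑ P ∈ sb, εm V P.2 • S U V P.1) * (∑ p ∈ sa, εm V p.2 • S U V p.1) := by
        conv_lhs => rw [← hcra, ← hcrb]
        simp [map_sum, map_smul]
    _ = ∑ P ∈ sb, ∑ p ∈ sa, S U V P.1 * S U V p.1 * ((εm V p.2 * εm V P.2) • (1 : Cg V U)) := by
        rw [Finset.sum_mul_sum]
        refine Finset.sum_congr rfl fun P _ => Finset.sum_congr rfl fun p _ => ?_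
        simp only [smul_mul_assoc, mul_smul_comm, smul_smul, mul_one]
    _ = ∑ P ∈ sb, ∑ p ∈ sa, ∑ q ∈ ta p, ∑ Q ∈ ta P,
          S U V P.1 * (S U V p.1 * (q.1 * (Q.1 * S U V (q.2 * Q.2)))) := by
        refine Finset.sum_congr rfl fun P _ => Finset.sum_congr rfl fun p _ => ?_
        rw [← hmix p P, Finset.mul_sum]
        refine Finset.sum_congr rfl fun q _ => ?_
        rw [Finset.mul_sum]
        exact Finset.sum_congr rfl fun Q _ => by simp only [mul_assoc]
    _ = ∑ P ∈ sb, ∑ Q ∈ ta P, ∑ p ∈ sa, ∑ q ∈ ta p,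
          S U V P.1 * (S U V p.1 * (q.1 * (Q.1 * S U V (q.2 * Q.2)))) := by
        refine Finset.sum_congr rfl fun P _ => ?_
        have h1 : ∀ p ∈ sa, ∑ q ∈ ta p, ∑ Q ∈ ta P,
            S U V P.1 * (S U V p.1 * (q.1 * (Q.1 * S U V (q.2 * Q.2))))
            = ∑ Q ∈ ta P, ∑ q ∈ ta p,
            S U V P.1 * (S U V p.1 * (q.1 * (Q.1 * S U V (q.2 * Q.2)))) :=
          fun p _ => Finset.sum_comm
        rw [Finset.sum_congr rfl h1, Finset.sum_comm]
    _ = ∑ P ∈ sb, ∑ Q ∈ ta P, ∑ r ∈ sa', ∑ w ∈ ta' r,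
          S U V P.1 * (S U V w.1 * (w.2 * (Q.1 * S U V (r.2 * Q.2)))) := by
        refine Finset.sum_congr rfl fun P _ => Finset.sum_congr rfl fun Q _ => ?_
        exact tripleExchange Δ hcoassoc U V a
          (triLin (fun a₁ a₂ a₃ => S U V P.1 * (S U V a₁ * (a₂ * (Q.1 * S U V (a₃ * Q.2)))))
            (by intros; simp [map_add, add_mul, mul_add])
            (by intros; simp [map_smul, smul_mul_assoc, mul_smul_comm])
            (by intros; simp [add_mul, mul_add])
            (by intros; simp [smul_mul_assoc, mul_smul_comm])
            (by intros; simp [add_mul, map_add, mul_add])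
            (by intros; simp [smul_mul_assoc, map_smul, mul_smul_comm]))
          sa hsa ta hta sa' hsa' ta' hta'
    _ = ∑ P ∈ sb, ∑ Q ∈ ta P, ∑ r ∈ sa', εm U r.1 • (S U V P.1 * (Q.1 * S U V (r.2 * Q.2))) := by
        refine Finset.sum_congr rfl fun P _ => Finset.sum_congr rfl fun Q _ =>
          Finset.sum_congr rfl fun r _ => ?_
        calc ∑ w ∈ ta' r, S U V P.1 * (S U V w.1 * (w.2 * (Q.1 * S U V (r.2 * Q.2))))
            = S U V P.1 * ((∑ w ∈ ta' r, S U V w.1 * w.2) * (Q.1 * S U V (r.2 * Q.2))) := by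
              rw [Finset.sum_mul, Finset.mul_sum]
              exact Finset.sum_congr rfl fun w _ => by simp only [mul_assoc]
          _ = εm U r.1 • (S U V P.1 * (Q.1 * S U V (r.2 * Q.2))) := by
              rw [hwa r, smul_mul_assoc, one_mul, mul_smul_comm]
    _ = ∑ P ∈ sb, ∑ Q ∈ ta P, S U V P.1 * (Q.1 * S U V (a * Q.2)) := by
        refine Finset.sum_congr rfl fun P _ => Finset.sum_congr rfl fun Q _ => ?_
        conv_rhs => rw [← hcla]
        rw [Finset.sum_mul, map_sum, Finset.mul_sum, Finset.mul_sum]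
        exact Finset.sum_congr rfl fun r _ => by
          simp [smul_mul_assoc, map_smul, mul_smul_comm]
    _ = ∑ r ∈ sb', ∑ w ∈ ta' r, S U V w.1 * (w.2 * S U V (a * r.2)) := by
        exact tripleExchange Δ hcoassoc U V b
          (triLin (fun b₁ b₂ b₃ => S U V b₁ * (b₂ * S U V (a * b₃)))
            (by intros; simp [map_add, add_mul])
            (by intros; simp [map_smul, smul_mul_assoc])
            (by intros; simp [add_mul, mul_add])
            (by intros; simp [smul_mul_assoc, mul_smul_comm])
            (by intros; simp [mul_add, map_add, mul_add])
            (by intros; simp [map_smul, mul_smul_comm]))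
          sb hsb ta hta sb' hsb' ta' hta'
    _ = ∑ r ∈ sb', εm U r.1 • S U V (a * r.2) := by
        refine Finset.sum_congr rfl fun r _ => ?_
        calc ∑ w ∈ ta' r, S U V w.1 * (w.2 * S U V (a * r.2))
            = (∑ w ∈ ta' r, S U V w.1 * w.2) * S U V (a * r.2) := by
              rw [Finset.sum_mul]
              exact Finset.sum_congr rfl fun w _ => by simp only [mul_assoc]
          _ = εm U r.1 • S U V (a * r.2) := by rw [hwa r, smul_mul_assoc, one_mul]
    _ = S U V (a * b) := by
        conv_rhs => rw [← hclb]
        rw [Finset.mul_sum, map_sum]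
        exact Finset.sum_congr rfl fun r _ => by simp [mul_smul_comm, map_smul]

end aux

/-- in a cogroupoid `C` with `A = C(X,X)`, `R = C(X,Y)`, if an
algebra automorphism `θ` of `R` satisfies `ψ(θ(a⁽¹⁾) x a⁽²⁾) = ε(a) ψ(x)` for all
`a ∈ A`, `x ∈ R` (with `a⁽¹⁾ ⊗ a⁽²⁾ = a₍₁₎^{XY} ⊗ S_{Y,X}(a₍₂₎^{YX})`), then `ψ`
is a twisted trace with respect to `σ := S_{Y,X} ∘ S_{X,Y} ∘ θ⁻¹`. -/
theorem cogroupoid_MU_to_twisted_trace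
    {k : Type*} [Field k] {ι : Type*} (Cg : ι → ι → Type*)
    [∀ U V, Ring (Cg U V)] [∀ U V, Algebra k (Cg U V)]
    (Δ : ∀ U V W, Cg U V →ₐ[k] Cg U W ⊗[k] Cg W V)
    (εm : ∀ U, Cg U U →ₐ[k] k)
    (S : ∀ U V, Cg U V →ₗ[k] Cg V U)
    -- coassociativity
    (hcoassoc : ∀ (U V W T : ι) (a : Cg U V),
      (TensorProduct.map (Δ U W T).toLinearMap (LinearMap.id : Cg W V →ₗ[k] Cg W V))
          (Δ U V W a) =
        (TensorProduct.assoc k (Cg U T) (Cg T W) (Cg W V)).symm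
          ((TensorProduct.map (LinearMap.id : Cg U T →ₗ[k] Cg U T) (Δ T V W).toLinearMap)
            (Δ U V T a)))
    -- left counit axiom
    (hcounitl : ∀ (U V : ι) (a : Cg U V),
      (TensorProduct.lid k (Cg U V))
        ((TensorProduct.map (εm U).toLinearMap (LinearMap.id : Cg U V →ₗ[k] Cg U V))
          (Δ U V U a)) = a)
    -- right counit axiom
    (hcounitr : ∀ (U V : ι) (a : Cg U V),
      (TensorProduct.rid k (Cg U V))
        ((TensorProduct.map (LinearMap.id : Cg U V →ₗ[k] Cg U V) (εm V).toLinearMap)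
          (Δ U V V a)) = a)
    -- antipode axioms
    (hS₁ : ∀ (U V : ι) (a : Cg U U),
      (LinearMap.mul' k (Cg V U))
        ((TensorProduct.map (S U V) (LinearMap.id : Cg V U →ₗ[k] Cg V U)) (Δ U U V a)) =
        εm U a • (1 : Cg V U))
    (hS₂ : ∀ (U V : ι) (a : Cg U U),
      (LinearMap.mul' k (Cg U V))
        ((TensorProduct.map (LinearMap.id : Cg U V →ₗ[k] Cg U V) (S V U)) (Δ U U V a)) =
        εm U a • (1 : Cg U V))
    (X Y : ι)
    (ψ : Cg X Y →ₗ[k] k) (θ : Cg X Y ≃ₐ[k] Cg X Y)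
    (hMU : ∀ (a : Cg X X) (x : Cg X Y),
      ψ ((LinearMap.mul' k (Cg X Y))
        ((TensorProduct.map (LinearMap.mulRight k x) (LinearMap.id : Cg X Y →ₗ[k] Cg X Y))
          ((TensorProduct.map (θ.toLinearMap : Cg X Y →ₗ[k] Cg X Y) (S Y X))
            (Δ X X Y a)))) = εm X a * ψ x) :
    ∀ x y : Cg X Y, ψ (x * y) = ψ (y * (S Y X) ((S X Y) (θ.symm x))) := by
  classical
  intro x y
  set u : Cg X Y := θ.symm x with hu
  -- decompositions of u
  obtain ⟨s, hs⟩ := TensorProduct.exists_finset (Δ X Y Y u)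
  choose t ht using fun p : Cg X Y × Cg Y Y => TensorProduct.exists_finset (Δ Y Y X p.2)
  obtain ⟨s', hs'⟩ := TensorProduct.exists_finset (Δ X Y X u)
  choose t' ht' using fun r : Cg X X × Cg X Y => TensorProduct.exists_finset (Δ X X Y r.1)
  -- counit facts
  have hur : ∑ p ∈ s, εm Y p.2 • p.1 = u := by
    have h := hcounitr X Y u
    rw [hs] at h
    simpa [map_sum, TensorProduct.rid_tmul] using h
  have hul : ∑ r ∈ s', εm X r.1 • r.2 = u := by
    have h := hcounitl X Y u
    rw [hs'] at h
    simpa [map_sum, TensorProduct.lid_tmul] using h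
  -- antipode fact
  have hq : ∀ p : Cg X Y × Cg Y Y,
      ∑ q ∈ t p, q.1 * S X Y q.2 = εm Y p.2 • (1 : Cg Y X) := by
    intro p
    have h := hS₂ Y X p.2
    rw [ht p] at h
    simpa [map_sum, LinearMap.mul'_apply] using h
  -- S sends 1 to 1
  have hSone : S Y X (1 : Cg Y X) = (1 : Cg X Y) := by
    have h := hS₁ Y X 1
    rw [map_one] at h
    simpa [Algebra.TensorProduct.one_def, LinearMap.mul'_apply] using h
  -- the modular-unimodularity hypothesis, decomposed
  have hMU' : ∀ (r : Cg X X × Cg X Y) (x₀ : Cg X Y),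
      ∑ w ∈ t' r, ψ (θ w.1 * x₀ * S Y X w.2) = εm X r.1 * ψ x₀ := by
    intro r x₀
    have h := hMU r.1 x₀
    rw [ht' r] at h
    simpa [map_sum, LinearMap.mul'_apply, LinearMap.mulRight_apply] using h
  have key : ψ (y * S Y X (S X Y u)) = ψ (θ u * y) := by
    calc ψ (y * S Y X (S X Y u))
        = ∑ r ∈ s', εm X r.1 * ψ (y * S Y X (S X Y r.2)) := by
          conv_lhs => rw [← hul]
          simp [map_sum, map_smul, Finset.mul_sum, mul_smul_comm, smul_eq_mul]
      _ = ∑ r ∈ s', ∑ w ∈ t' r, ψ (θ w.1 * (y * S Y X (S X Y r.2)) * S Y X w.2) :=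
          Finset.sum_congr rfl fun r _ => (hMU' r _).symm
      _ = ∑ p ∈ s, ∑ q ∈ t p, ψ (θ p.1 * (y * S Y X (S X Y q.2)) * S Y X q.1) := by
          exact (tripleExchange Δ hcoassoc X Y u
            (triLin (fun a b c => ψ (θ a * (y * S Y X (S X Y c)) * S Y X b))
              (by intros; simp [map_add, add_mul])
              (by intros; simp [map_smul, smul_mul_assoc])
              (by intros; simp [map_add, mul_add])
              (by intros; simp [map_smul, mul_smul_comm])
              (by intros; simp [map_add, mul_add, add_mul])
              (by intros; simp [map_smul, mul_smul_comm, smul_mul_assoc]))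
            s hs t ht s' hs' t' ht').symm
      _ = ∑ p ∈ s, ψ (θ p.1 * (y * S Y X (εm Y p.2 • (1 : Cg Y X)))) := by
          refine Finset.sum_congr rfl fun p _ => ?_
          rw [← hq p, map_sum, Finset.mul_sum, Finset.mul_sum, map_sum]
          refine Finset.sum_congr rfl fun q _ => ?_
          rw [S_antimul Δ εm S hcoassoc hcounitl hcounitr hS₁ hS₂ Y X q.1 (S X Y q.2)]
          simp only [mul_assoc]
      _ = ∑ p ∈ s, εm Y p.2 • ψ (θ p.1 * y) := by
          refine Finset.sum_congr rfl fun p _ => ?_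
          rw [map_smul, hSone]
          simp [mul_smul_comm, map_smul]
      _ = ψ (θ u * y) := by
          conv_rhs => rw [← hur]
          simp [map_sum, map_smul, Finset.sum_mul, smul_mul_assoc]
  rw [key, hu, θ.apply_symm_apply]
end

section
/- Let φ : A → B be an algebra map. Suppose there exist an algebra automorphism θ of B and a linear map E : B → A with E(1) = 1 and E(θ(φ(a)) b φ(a')) = a E(b) a' for all a, a' ∈ A, b ∈ B. Then for every left A-module V, the map ν_V : B ⊗_A V → V, b ⊗_A v ↦ E(b)·v, is well defined, and is A-linear as a map φ_*(θ_*(B ⊗_A V)) → V, where θ_*(B ⊗_A V) has B-action b·(b' ⊗_A v) = θ(b)b' ⊗_A v; moreover the family (ν_V) is natural in V and satisfies ν_V ∘ φ_*(θ_{B⊗_A V}) ∘ η_V = id for V = A, where η_V(v) = 1 ⊗_A v. -/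
/-- given an algebra map `φ : A → B`, an algebra automorphism `θ` of
`B` and a linear map `E : B → A` with `E(1) = 1` and
`E(θ(φ(a)) b φ(a')) = a E(b) a'`, the assignment `b ⊗ v ↦ E(b)·v` yields, for every
left `A`-module `V`, a well-defined `A`-linear map
`ν_V : φ_*(θ_*(B ⊗_A V)) → V`, natural in `V`, and the composite
`ν_V ∘ φ_*(θ_{B ⊗_A V}) ∘ η_V` is the identity for `V = A`.

Concretely: the bilinear map `(b, v) ↦ E(b)·v` is `A`-balanced, is `A`-linear for
the `θ`-twisted action on the `B`-factor, commutes with every `A`-linear map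
`f : V → W`, and satisfies `E(θ(φ(a))) = a`. -/
theorem induction_functor_twisted_separability_datum
    {k : Type*} [Field k] {A B : Type*} [Ring A] [Ring B] [Algebra k A] [Algebra k B]
    (φ : A →ₐ[k] B) (θ : B ≃ₐ[k] B) (E : B →ₗ[k] A)
    (hE1 : E 1 = 1)
    (hE : ∀ (a a' : A) (b : B), E (θ (φ a) * b * φ a') = a * E b * a') :
    -- `ν_V` is well defined: the bilinear map is `A`-balanced
    (∀ (V : Type*) [AddCommGroup V] [Module A V] (b : B) (a : A) (v : V),
        E (b * φ a) • v = E b • (a • v)) ∧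
    -- `ν_V` is `A`-linear as a map `φ_*(θ_*(B ⊗_A V)) → V`
    (∀ (V : Type*) [AddCommGroup V] [Module A V] (a : A) (b : B) (v : V),
        E (θ (φ a) * b) • v = a • (E b • v)) ∧
    -- naturality in `V`
    (∀ (V W : Type*) [AddCommGroup V] [Module A V] [AddCommGroup W] [Module A W]
        (f : V →+ W), (∀ (a : A) (v : V), f (a • v) = a • f v) →
        ∀ (b : B) (v : V), f (E b • v) = E b • f v) ∧
    -- the unit property at the free module `V = A`:
    -- `ν_A ∘ φ_*(θ_{B ⊗_A A}) ∘ η_A = id`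
    (∀ a : A, E (θ (φ a)) = a) := by
  refine ⟨?_, ?_, ?_, ?_⟩
  · intro V _ _ b a v
    have h := hE 1 a b
    simp only [map_one, one_mul] at h
    rw [h, mul_smul]
  · intro V _ _ a b v
    have h := hE a 1 b
    simp only [map_one, mul_one] at h
    rw [h, mul_smul]
  · intro V W _ _ _ _ f hf b v
    exact hf _ _
  · intro a
    have h := hE a 1 1
    simpa [hE1] using h
end

section
/- Let φ : A → B be an algebra map such that the induction functor φ^* : A-Mod → B-Mod is twisted separable with a standard-type datum (θ_*, F, θ_−), where θ is an algebra automorphism of B and the free A-module A lies in F. Then there exists a linear map E : B → A with E(1) = 1 and E(θ(φ(a)) b φ(a')) = a E(b) a' for all a, a' ∈ A and b ∈ B. -/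
open CategoryTheory TensorProduct

/-- Right multiplication as an `A`-linear endomorphism of `A`. -/
def rmulLin {A : Type*} [Ring A] (a' : A) : A →ₗ[A] A where
  toFun x := x * a'
  map_add' x y := add_mul x y a'
  map_smul' c x := by simp [smul_eq_mul, mul_assoc]

/-- if the induction functor `φ^* = B ⊗_A -` (presented as a left
adjoint `F` of the restriction functor along `φ`) is twisted separable of standard
type with datum `(θ_*, 𝓕, θ_-)`, where `θ` is an algebra automorphism of `B` and
the free module `A` lies in `𝓕`, then there is a linear map `E : B → A` with
`E(1) = 1` and `E(θ(φ(a)) b φ(a')) = a E(b) a'`.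

The standard-type condition at `P = A` is expressed via the canonical
trivialization `B ≅ F(A)`, `b ↦ b • η_A(1)`. -/
theorem induction_functor_twisted_separable_gives_E
    {k : Type*} [Field k] {A B : Type*} [Ring A] [Ring B] [Algebra k A] [Algebra k B]
    (φ : A →ₐ[k] B) (θ : B ≃ₐ[k] B)
    (F : ModuleCat A ⥤ ModuleCat B)
    (adj : F ⊣ ModuleCat.restrictScalars φ.toRingHom)
    (𝓕 : Set (ModuleCat A)) (hgen : IsGeneratingClass 𝓕)
    (hA : ModuleCat.of A A ∈ 𝓕)
    (θiso : ∀ P : ModuleCat A, P ∈ 𝓕 →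
      (F.obj P ≅ (ModuleCat.restrictScalars (θ : B →ₐ[k] B).toRingHom).obj (F.obj P)))
    (M : ∀ V W : ModuleCat A,
      (F.obj V ⟶ (ModuleCat.restrictScalars (θ : B →ₐ[k] B).toRingHom).obj (F.obj W)) →
        (V ⟶ W))
    (hMnat : ∀ (V' V W W' : ModuleCat A) (α : V' ⟶ V) (β : W ⟶ W')
      (f : F.obj V ⟶ (ModuleCat.restrictScalars (θ : B →ₐ[k] B).toRingHom).obj (F.obj W)),
        α ≫ M V W f ≫ β =
          M V' W' (F.map α ≫ f ≫
            (ModuleCat.restrictScalars (θ : B →ₐ[k] B).toRingHom).map (F.map β)))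
    (hM : ∀ (P : ModuleCat A) (hP : P ∈ 𝓕), M P P (θiso P hP).hom = 𝟙 P)
    -- standard-type condition at the free module `A`, via the canonical
    -- trivialization `B ≃ F(A)`, `b ↦ b • η_A(1)`
    (hstd : ∀ (b : B) (u : (F.obj (ModuleCat.of A A) : Type _)),
      u = (adj.unit.app (ModuleCat.of A A)) (1 : A) →
      (θiso (ModuleCat.of A A) hA).hom (b • u) = θ b • u) :
    ∃ E : B →ₗ[k] A, E 1 = 1 ∧
      ∀ (a a' : A) (b : B), E (θ (φ a) * b * φ a') = a * E b * a' := by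
  classical
  let toA : ((ModuleCat.of A A : Type _)) → A := fun x => x
  let ofA : A → (ModuleCat.of A A : Type _) := fun x => x
  let oneP : (ModuleCat.of A A : Type _) := ofA 1
  let u₀ : (F.obj (ModuleCat.of A A) : Type _) := adj.unit.app (ModuleCat.of A A) oneP
  let ν : ((ModuleCat.restrictScalars φ.toRingHom).obj
      ((ModuleCat.restrictScalars (θ : B →ₐ[k] B).toRingHom).obj
        (F.obj (ModuleCat.of A A)))) ⟶ ModuleCat.of A A :=
    M ((ModuleCat.restrictScalars φ.toRingHom).obj
        ((ModuleCat.restrictScalars (θ : B →ₐ[k] B).toRingHom).obj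
          (F.obj (ModuleCat.of A A)))) (ModuleCat.of A A)
      (adj.counit.app ((ModuleCat.restrictScalars (θ : B →ₐ[k] B).toRingHom).obj
        (F.obj (ModuleCat.of A A))))
  let Efun : B → A := fun b =>
    toA (ν ((b • u₀ : (F.obj (ModuleCat.of A A) : Type _))))
  -- unit applied to a : unit a = φ a • u₀
  have hunit : ∀ a : A, (adj.unit.app (ModuleCat.of A A)) (ofA a) = φ a • u₀ := by
    intro a
    have h := (adj.unit.app (ModuleCat.of A A)).hom.map_smul a oneP
    have ha : a • oneP = ofA a := mul_one a
    rw [ha] at h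
    exact h
  -- ν u₀ = 1
  have hν₀ : toA (ν u₀) = 1 := by
    have hsplit := (adj.homEquiv (ModuleCat.of A A)
      ((ModuleCat.restrictScalars (θ : B →ₐ[k] B).toRingHom).obj
        (F.obj (ModuleCat.of A A)))).symm_apply_apply
      (θiso (ModuleCat.of A A) hA).hom
    rw [Adjunction.homEquiv_counit] at hsplit
    have h := hMnat (ModuleCat.of A A) _ (ModuleCat.of A A) (ModuleCat.of A A)
      (adj.homEquiv (ModuleCat.of A A) _ (θiso (ModuleCat.of A A) hA).hom)
      (𝟙 (ModuleCat.of A A)) (adj.counit.app _)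
    simp only [Category.comp_id, CategoryTheory.Functor.map_id, Category.comp_id] at h
    rw [hsplit, hM (ModuleCat.of A A) hA] at h
    have hval := DFunLike.congr_fun (congrArg ModuleCat.Hom.hom h) oneP
    have hval' : toA (ν ((adj.homEquiv (ModuleCat.of A A) _
        (θiso (ModuleCat.of A A) hA).hom) oneP)) = 1 := hval
    have happ : (adj.homEquiv (ModuleCat.of A A) _
        (θiso (ModuleCat.of A A) hA).hom) oneP = u₀ := by
      have happ0 : (adj.homEquiv (ModuleCat.of A A) _
          (θiso (ModuleCat.of A A) hA).hom) oneP
          = (θiso (ModuleCat.of A A) hA).hom u₀ := rfl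
      rw [happ0]
      have hs := hstd 1 u₀ rfl
      rw [one_smul, map_one, one_smul] at hs
      exact hs
    rw [happ] at hval'
    exact hval'
  -- naturality : ν (F.map (rmul a') x) = ν x * a'
  have hnat : ∀ (a' : A) (x : (F.obj (ModuleCat.of A A) : Type _)),
      toA (ν ((F.map (ModuleCat.ofHom (rmulLin a'))) x)) = toA (ν x) * a' := by
    intro a' x
    have h1 := hMnat ((ModuleCat.restrictScalars φ.toRingHom).obj
        ((ModuleCat.restrictScalars (θ : B →ₐ[k] B).toRingHom).obj
          (F.obj (ModuleCat.of A A)))) _ (ModuleCat.of A A) (ModuleCat.of A A)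
      (𝟙 _) (ModuleCat.ofHom (rmulLin a')) (adj.counit.app _)
    simp only [Category.id_comp, CategoryTheory.Functor.map_id] at h1
    have h2 := hMnat ((ModuleCat.restrictScalars φ.toRingHom).obj
        ((ModuleCat.restrictScalars (θ : B →ₐ[k] B).toRingHom).obj
          (F.obj (ModuleCat.of A A)))) _ (ModuleCat.of A A) (ModuleCat.of A A)
      ((ModuleCat.restrictScalars φ.toRingHom).map
        ((ModuleCat.restrictScalars (θ : B →ₐ[k] B).toRingHom).map
          (F.map (ModuleCat.ofHom (rmulLin a')))))
      (𝟙 (ModuleCat.of A A)) (adj.counit.app _)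
    simp only [Category.comp_id, CategoryTheory.Functor.map_id] at h2
    have h3 := adj.counit.naturality
      ((ModuleCat.restrictScalars (θ : B →ₐ[k] B).toRingHom).map
        (F.map (ModuleCat.ofHom (rmulLin a'))))
    rw [Functor.comp_map, Functor.id_map] at h3
    rw [h3] at h2
    have h := h2.trans h1.symm
    exact DFunLike.congr_fun (congrArg ModuleCat.Hom.hom h) x
  -- F.map (rmul a') at u₀
  have hFu : ∀ a' : A, (F.map (ModuleCat.ofHom (rmulLin a'))) u₀ = φ a' • u₀ := by
    intro a'
    have h' := DFunLike.congr_fun (congrArg ModuleCat.Hom.hom (adj.unit.naturality (ModuleCat.ofHom (rmulLin a')))) oneP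
    have h'' : (adj.unit.app (ModuleCat.of A A)) ((ModuleCat.ofHom (rmulLin a')) oneP)
        = (F.map (ModuleCat.ofHom (rmulLin a'))) u₀ := h'
    have h1 : (ModuleCat.ofHom (rmulLin a')) oneP = ofA a' := one_mul a'
    rw [h1, hunit a'] at h''
    exact h''.symm
  have hEsmul : ∀ (a : A) (x : (F.obj (ModuleCat.of A A) : Type _)),
      toA (ν ((θ (φ a) • x : (F.obj (ModuleCat.of A A) : Type _)))) = a * toA (ν x) := by
    intro a x
    exact ν.hom.map_smul a x
  refine ⟨{ toFun := Efun, map_add' := ?_, map_smul' := ?_ }, ?_, ?_⟩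
  · intro b b'
    show toA (ν (((b + b') • u₀ : (F.obj (ModuleCat.of A A) : Type _))))
      = toA (ν ((b • u₀ : (F.obj (ModuleCat.of A A) : Type _))))
        + toA (ν ((b' • u₀ : (F.obj (ModuleCat.of A A) : Type _))))
    rw [add_smul]
    exact ν.hom.map_add (b • u₀) (b' • u₀)
  · intro c b
    show toA (ν (((c • b) • u₀ : (F.obj (ModuleCat.of A A) : Type _))))
      = c • toA (ν ((b • u₀ : (F.obj (ModuleCat.of A A) : Type _))))
    have h : ((c • b) • u₀ : (F.obj (ModuleCat.of A A) : Type _))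
        = (θ (φ (algebraMap k A c)) • (b • u₀ : (F.obj (ModuleCat.of A A) : Type _))
            : (F.obj (ModuleCat.of A A) : Type _)) := by
      rw [φ.commutes, θ.commutes, ← mul_smul, ← Algebra.smul_def]
    rw [h, hEsmul]
    exact (Algebra.smul_def c (toA (ν (b • u₀)))).symm
  · show toA (ν (((1 : B) • u₀ : (F.obj (ModuleCat.of A A) : Type _)))) = 1
    rw [one_smul]; exact hν₀
  · intro a a' b
    show toA (ν (((θ (φ a) * b * φ a') • u₀ : (F.obj (ModuleCat.of A A) : Type _))))
      = a * toA (ν ((b • u₀ : (F.obj (ModuleCat.of A A) : Type _)))) * a'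
    have h2 : ((b * φ a') • u₀ : (F.obj (ModuleCat.of A A) : Type _))
        = (F.map (ModuleCat.ofHom (rmulLin a'))) (b • u₀) := by
      rw [map_smul, hFu, ← mul_smul]
    have h1 : ((θ (φ a) * b * φ a') • u₀ : (F.obj (ModuleCat.of A A) : Type _))
        = (θ (φ a) • ((b * φ a') • u₀ : (F.obj (ModuleCat.of A A) : Type _))
            : (F.obj (ModuleCat.of A A) : Type _)) := by
      rw [← mul_smul, mul_assoc]
    rw [h1, h2, hEsmul, hnat]
    exact (mul_assoc a (toA (ν (b • u₀))) a').symm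
end
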